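/- arXiv:2407.14884 — 3 statements merged into one kernel-verified Lean document; each statement's English description precedes it below -/
import Mathlib

section
/- Let E be a separable Banach space, F a Banach space, (Ω,F,ℙ) a probability space, and 1 ≤ p < ∞. The space Λ_p^ℙ(E,F) of bounded linear operators L : L^p(Ω,E,ℙ) → F with finite p-semivariation norm ⦀L⦀_{p,ℙ} < ∞, equipped with ⦀·⦀_{p,ℙ}, is a Banach space. -/
open MeasureTheory ENNReal NNReal Filter
noncomputable section
set_option linter.unusedSectionVars false

/-- The `p`-semivariation norm `⦀L⦀_{p,ℙ}` of a linear operator `L : L^p(Ω,E,ℙ) → F`: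
supremum of `∑ ‖L(1_{Aᵢ} xᵢ)‖` over simple functions `∑ 1_{Aᵢ} xᵢ` with `Aᵢ` pairwise
disjoint measurable and `L^p`-norm at most `1`. -/
def opSemiVar {Ω E F : Type*} [MeasurableSpace Ω] (P : Measure Ω) [IsFiniteMeasure P]
    [NormedAddCommGroup E] [NormedSpace ℝ E] [NormedAddCommGroup F] [NormedSpace ℝ F]
    (p : ℝ≥0∞) [Fact (1 ≤ p)] (L : Lp E p P →L[ℝ] F) : ℝ≥0∞ :=
  ⨆ (n : ℕ) (As : Fin n → Set Ω) (xs : Fin n → E) (hAs : ∀ i, MeasurableSet (As i))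
    (_ : Pairwise (Function.onFun Disjoint As))
    (_ : eLpNorm (fun ω => ∑ i, (As i).indicator (fun _ => xs i) ω) p P ≤ 1),
    ∑ i, (‖L (indicatorConstLp p (hAs i) (measure_ne_top P (As i)) (xs i))‖₊ : ℝ≥0∞)

lemma simpleFunc_decomp {Ω E : Type*} [MeasurableSpace Ω] [NormedAddCommGroup E]
    (s : SimpleFunc Ω E) :
    ∃ (n : ℕ) (As : Fin n → Set Ω) (xs : Fin n → E),
      (∀ i, MeasurableSet (As i)) ∧ Pairwise (Function.onFun Disjoint As) ∧
      (∀ ω, ∑ i, (As i).indicator (fun _ => xs i) ω = s ω) := by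
  classical
  set T : Finset E := s.range.erase 0 with hT
  set e : {y // y ∈ T} ≃ Fin T.card := T.equivFin with he
  refine ⟨T.card, fun i => s ⁻¹' {(e.symm i : E)}, fun i => (e.symm i : E),
    fun i => s.measurableSet_fiber _, ?_, ?_⟩
  · intro i j hij
    have hne : (e.symm i : E) ≠ (e.symm j : E) := by
      intro h
      exact hij (e.symm.injective (Subtype.ext h) ▸ rfl)
    refine Set.disjoint_left.2 fun ω hi hj => ?_
    exact hne (by rw [← Set.mem_singleton_iff.1 hi, ← Set.mem_singleton_iff.1 hj])
  · intro ω
    have : ∑ i, (s ⁻¹' {(e.symm i : E)}).indicator (fun _ => (e.symm i : E)) ω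
        = ∑ y ∈ T, (s ⁻¹' {y}).indicator (fun _ => y) ω := by
      rw [← Finset.sum_coe_sort T (fun y => (s ⁻¹' {y}).indicator (fun _ => y) ω)]
      exact Fintype.sum_equiv e.symm _ _ (fun i => rfl)
    rw [this]
    by_cases h0 : s ω = 0
    · rw [h0]
      refine Finset.sum_eq_zero fun y hy => ?_
      have hnm : ω ∉ s ⁻¹' {y} := fun hmem =>
        (Finset.ne_of_mem_erase hy) (by rw [← Set.eq_of_mem_singleton hmem, h0])
      exact Set.indicator_of_notMem hnm _
    · have hmem : s ω ∈ T := Finset.mem_erase.2 ⟨h0, s.mem_range_self ω⟩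
      rw [Finset.sum_eq_single_of_mem (s ω) hmem]
      · exact Set.indicator_of_mem (Set.mem_preimage.2 rfl) _
      · intro y _ hy
        have hnm : ω ∉ s ⁻¹' {y} := fun hmem => hy (Set.eq_of_mem_singleton hmem).symm
        exact Set.indicator_of_notMem hnm _

section
variable {Ω E F : Type*} [MeasurableSpace Ω] {P : Measure Ω} [IsFiniteMeasure P]
    [NormedAddCommGroup E] [NormedSpace ℝ E] [NormedAddCommGroup F] [NormedSpace ℝ F]
    {p : ℝ≥0∞} [Fact (1 ≤ p)]

lemma sum_le_opSemiVar (L : Lp E p P →L[ℝ] F) {n : ℕ} (As : Fin n → Set Ω) (xs : Fin n → E)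
    (hAs : ∀ i, MeasurableSet (As i)) (hd : Pairwise (Function.onFun Disjoint As))
    (hn : eLpNorm (fun ω => ∑ i, (As i).indicator (fun _ => xs i) ω) p P ≤ 1) :
    ∑ i, (‖L (indicatorConstLp p (hAs i) (measure_ne_top P (As i)) (xs i))‖₊ : ℝ≥0∞)
      ≤ opSemiVar P p L := by
  unfold opSemiVar
  exact le_iSup_of_le n <| le_iSup_of_le As <| le_iSup_of_le xs <| le_iSup_of_le hAs <|
    le_iSup_of_le hd <| le_iSup_of_le hn le_rfl

lemma opSemiVar_le {L : Lp E p P →L[ℝ] F} {C : ℝ≥0∞}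
    (h : ∀ (n : ℕ) (As : Fin n → Set Ω) (xs : Fin n → E) (hAs : ∀ i, MeasurableSet (As i)),
      Pairwise (Function.onFun Disjoint As) →
      eLpNorm (fun ω => ∑ i, (As i).indicator (fun _ => xs i) ω) p P ≤ 1 →
      ∑ i, (‖L (indicatorConstLp p (hAs i) (measure_ne_top P (As i)) (xs i))‖₊ : ℝ≥0∞) ≤ C) :
    opSemiVar P p L ≤ C := by
  unfold opSemiVar
  exact iSup_le fun n => iSup_le fun As => iSup_le fun xs => iSup_le fun hAs =>
    iSup_le fun hd => iSup_le fun hn => h n As xs hAs hd hn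

lemma opSemiVar_add_le (L L' : Lp E p P →L[ℝ] F) :
    opSemiVar P p (L + L') ≤ opSemiVar P p L + opSemiVar P p L' := by
  refine opSemiVar_le fun n As xs hAs hd hn => ?_
  calc ∑ i, (‖(L + L') (indicatorConstLp p (hAs i) (measure_ne_top P (As i)) (xs i))‖₊ : ℝ≥0∞)
      ≤ ∑ i, ((‖L (indicatorConstLp p (hAs i) (measure_ne_top P (As i)) (xs i))‖₊ : ℝ≥0∞)
          + (‖L' (indicatorConstLp p (hAs i) (measure_ne_top P (As i)) (xs i))‖₊ : ℝ≥0∞)) := by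
        refine Finset.sum_le_sum fun i _ => ?_
        rw [ContinuousLinearMap.add_apply, ← ENNReal.coe_add]
        exact ENNReal.coe_le_coe.2 (nnnorm_add_le _ _)
    _ = _ + _ := Finset.sum_add_distrib
    _ ≤ opSemiVar P p L + opSemiVar P p L' :=
        add_le_add (sum_le_opSemiVar L As xs hAs hd hn) (sum_le_opSemiVar L' As xs hAs hd hn)

lemma opSemiVar_smul (L : Lp E p P →L[ℝ] F) (c : ℝ) :
    opSemiVar P p (c • L) = (‖c‖₊ : ℝ≥0∞) * opSemiVar P p L := by
  unfold opSemiVar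
  simp_rw [ContinuousLinearMap.smul_apply, nnnorm_smul, ENNReal.coe_mul, ← Finset.mul_sum,
    ← ENNReal.mul_iSup]

lemma opSemiVar_neg (L : Lp E p P →L[ℝ] F) : opSemiVar P p (-L) = opSemiVar P p L := by
  rw [← neg_one_smul ℝ L, opSemiVar_smul]
  simp

lemma lp_coeFn_sum {ι : Type*} (t : Finset ι) (f : ι → Lp E p P) :
    (↑(∑ i ∈ t, f i) : Ω → E) =ᵐ[P] fun ω => ∑ i ∈ t, f i ω := by
  classical
  induction t using Finset.induction_on with
  | empty => simp only [Finset.sum_empty]; exact Lp.coeFn_zero E p P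
  | @insert a t ha ih =>
    rw [Finset.sum_insert ha]
    filter_upwards [Lp.coeFn_add (f a) (∑ i ∈ t, f i), ih] with ω h1 h2
    rw [h1, Pi.add_apply, h2]
    simp [Finset.sum_insert ha]
lemma simpleFunc_nnnorm_apply_le (L : Lp E p P →L[ℝ] F) (s : Lp.simpleFunc E p P)
    (hs : ‖(s : Lp E p P)‖₊ ≤ 1) : (‖L (s : Lp E p P)‖₊ : ℝ≥0∞) ≤ opSemiVar P p L := by
  obtain ⟨n, As, xs, hAs, hd, hsum⟩ := simpleFunc_decomp (Lp.simpleFunc.toSimpleFunc s)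
  have hfun : (fun ω => ∑ i, (As i).indicator (fun _ => xs i) ω)
      = ⇑(Lp.simpleFunc.toSimpleFunc s) := funext hsum
  have hae : ⇑(Lp.simpleFunc.toSimpleFunc s) =ᵐ[P] (s : Lp E p P) :=
    Lp.simpleFunc.toSimpleFunc_eq_toFun s
  have hnorm : eLpNorm (fun ω => ∑ i, (As i).indicator (fun _ => xs i) ω) p P ≤ 1 := by
    rw [hfun, eLpNorm_congr_ae hae]
    have := Lp.nnnorm_def (s : Lp E p P)
    calc eLpNorm ((s : Lp E p P) : Ω → E) p P
        = (‖(s : Lp E p P)‖₊ : ℝ≥0∞) := by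
          rw [this, ENNReal.coe_toNNReal (Lp.eLpNorm_ne_top _)]
      _ ≤ 1 := by exact_mod_cast hs
  have heq : (s : Lp E p P)
      = ∑ i, indicatorConstLp p (hAs i) (measure_ne_top P (As i)) (xs i) := by
    apply Lp.ext
    have h1 := lp_coeFn_sum (Finset.univ)
      (fun i => indicatorConstLp p (hAs i) (measure_ne_top P (As i)) (xs i))
    have h2 : ∀ᵐ ω ∂P, ∀ i : Fin n,
        indicatorConstLp p (hAs i) (measure_ne_top P (As i)) (xs i) ω
          = (As i).indicator (fun _ => xs i) ω :=
      ae_all_iff.2 fun i => indicatorConstLp_coeFn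
    filter_upwards [h1, h2, hae] with ω hω1 hω2 hω3
    rw [hω1, ← hω3, ← hsum ω]
    exact Finset.sum_congr rfl fun i _ => (hω2 i).symm
  calc (‖L (s : Lp E p P)‖₊ : ℝ≥0∞)
      = ‖∑ i, L (indicatorConstLp p (hAs i) (measure_ne_top P (As i)) (xs i))‖₊ := by
        rw [heq, map_sum]
    _ ≤ ∑ i, (‖L (indicatorConstLp p (hAs i) (measure_ne_top P (As i)) (xs i))‖₊ : ℝ≥0∞) := by
        rw [← ENNReal.coe_finset_sum]
        exact ENNReal.coe_le_coe.2 (nnnorm_sum_le _ _)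
    _ ≤ opSemiVar P p L := sum_le_opSemiVar L As xs hAs hd hnorm
end

section
variable {Ω E F : Type*} [MeasurableSpace Ω] {P : Measure Ω} [IsFiniteMeasure P]
    [NormedAddCommGroup E] [NormedSpace ℝ E] [NormedAddCommGroup F] [NormedSpace ℝ F]
    {p : ℝ≥0∞} [Fact (1 ≤ p)]

attribute [local instance] MeasureTheory.Lp.simpleFunc.smul

lemma simpleFunc_nnnorm_apply_le' (L : Lp E p P →L[ℝ] F) (s : Lp.simpleFunc E p P) :
    (‖L (s : Lp E p P)‖₊ : ℝ≥0∞) ≤ opSemiVar P p L * ‖(s : Lp E p P)‖₊ := by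
  by_cases h0 : (s : Lp E p P) = 0
  · simp [h0]
  · set c : ℝ≥0 := ‖(s : Lp E p P)‖₊ with hc
    have hc0 : c ≠ 0 := by simpa [hc] using h0
    set s' : Lp.simpleFunc E p P := ((c⁻¹ : ℝ≥0) : ℝ) • s with hs'
    have hcoe : (s' : Lp E p P) = ((c⁻¹ : ℝ≥0) : ℝ) • (s : Lp E p P) :=
      Lp.simpleFunc.coe_smul _ _
    have hnorm : ‖(s' : Lp E p P)‖₊ = 1 := by
      rw [hcoe, nnnorm_smul, NNReal.nnnorm_eq, ← hc, inv_mul_cancel₀ hc0]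
    have h1 := simpleFunc_nnnorm_apply_le L s' (le_of_eq hnorm)
    rw [hcoe, L.map_smul, nnnorm_smul, NNReal.nnnorm_eq, ENNReal.coe_mul] at h1
    have h2 := mul_le_mul_right h1 (c : ℝ≥0∞)
    rw [← mul_assoc, ← ENNReal.coe_mul, mul_inv_cancel₀ hc0, ENNReal.coe_one, one_mul] at h2
    exact h2.trans_eq (mul_comm _ _)
end

section
variable {Ω E F : Type*} [MeasurableSpace Ω] {P : Measure Ω} [IsFiniteMeasure P]
    [NormedAddCommGroup E] [NormedSpace ℝ E] [NormedAddCommGroup F] [NormedSpace ℝ F]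
    {p : ℝ≥0∞} [Fact (1 ≤ p)]

lemma nnnorm_apply_le_opSemiVar (hp' : p ≠ ∞) (L : Lp E p P →L[ℝ] F) (f : Lp E p P) :
    (‖L f‖₊ : ℝ≥0∞) ≤ opSemiVar P p L * ‖f‖₊ := by
  by_cases hfin : opSemiVar P p L = ∞
  · by_cases h0 : f = 0
    · simp [h0]
    · rw [hfin, ENNReal.top_mul (by simp only [ne_eq, ENNReal.coe_eq_zero, nnnorm_eq_zero]; exact h0)]
      exact le_top
  · set C := (opSemiVar P p L).toNNReal with hCdef
    have hC : (C : ℝ≥0∞) = opSemiVar P p L := ENNReal.coe_toNNReal hfin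
    have hclosed : IsClosed {g : Lp E p P | ‖L g‖ ≤ (C : ℝ) * ‖g‖} :=
      isClosed_le L.continuous.norm (continuous_const.mul continuous_norm)
    have hsub : Set.range ((↑) : Lp.simpleFunc E p P → Lp E p P)
        ⊆ {g : Lp E p P | ‖L g‖ ≤ (C : ℝ) * ‖g‖} := by
      rintro _ ⟨s, rfl⟩
      have h1 := simpleFunc_nnnorm_apply_le' L s
      rw [← hC, ← ENNReal.coe_mul] at h1
      have h2 : ‖L (s : Lp E p P)‖₊ ≤ C * ‖(s : Lp E p P)‖₊ := ENNReal.coe_le_coe.1 h1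
      exact_mod_cast h2
    have hmem : f ∈ {g : Lp E p P | ‖L g‖ ≤ (C : ℝ) * ‖g‖} := by
      have hdr := Lp.simpleFunc.denseRange (E := E) (μ := P) (p := p) hp'
      have : closure (Set.range ((↑) : Lp.simpleFunc E p P → Lp E p P)) = Set.univ :=
        hdr.closure_range
      exact (hclosed.closure_subset_iff.2 hsub) (this ▸ Set.mem_univ f)
    have h3 : ‖L f‖₊ ≤ C * ‖f‖₊ := by exact_mod_cast hmem
    calc (‖L f‖₊ : ℝ≥0∞) ≤ ((C * ‖f‖₊ : ℝ≥0) : ℝ≥0∞) := ENNReal.coe_le_coe.2 h3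
      _ = opSemiVar P p L * ‖f‖₊ := by rw [ENNReal.coe_mul, hC]

lemma opNorm_le_opSemiVar (hp' : p ≠ ∞) (L : Lp E p P →L[ℝ] F)
    (hfin : opSemiVar P p L ≠ ∞) : ‖L‖ ≤ (opSemiVar P p L).toReal := by
  refine L.opNorm_le_bound ENNReal.toReal_nonneg fun f => ?_
  have h := nnnorm_apply_le_opSemiVar hp' L f
  have h2 : (‖L f‖₊ : ℝ≥0∞) ≤ ((opSemiVar P p L).toNNReal * ‖f‖₊ : ℝ≥0) := by
    rw [ENNReal.coe_mul, ENNReal.coe_toNNReal hfin]; exact h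
  have h3 : ‖L f‖₊ ≤ (opSemiVar P p L).toNNReal * ‖f‖₊ := ENNReal.coe_le_coe.1 h2
  exact_mod_cast h3
end

section
variable {Ω E F : Type*} [MeasurableSpace Ω] {P : Measure Ω} [IsFiniteMeasure P]
    [NormedAddCommGroup E] [NormedSpace ℝ E] [NormedAddCommGroup F] [NormedSpace ℝ F]
    {p : ℝ≥0∞} [Fact (1 ≤ p)]

lemma indicatorConstLp_smul'' {A : Set Ω} (hA : MeasurableSet A) (hμ : P A ≠ ∞) (t : ℝ) (x : E) :
    indicatorConstLp p hA hμ (t • x) = t • indicatorConstLp p hA hμ x := by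
  apply Lp.ext
  filter_upwards [indicatorConstLp_coeFn (p := p) (hs := hA) (hμs := hμ) (c := t • x),
    Lp.coeFn_smul t (indicatorConstLp p hA hμ x),
    indicatorConstLp_coeFn (p := p) (hs := hA) (hμs := hμ) (c := x)] with ω h1 h2 h3
  rw [h1, h2, Pi.smul_apply, h3]
  by_cases h : ω ∈ A <;>
    simp [Set.indicator_of_mem, Set.indicator_of_notMem, h]

lemma opSemiVar_eq_zero_imp {P : Measure Ω} [IsProbabilityMeasure P] (hp' : p ≠ ∞)
    (L : Lp E p P →L[ℝ] F) (hL : opSemiVar P p L = 0) : L = 0 := by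
  have hp0 : p ≠ 0 := (lt_of_lt_of_le zero_lt_one (Fact.out : 1 ≤ p)).ne'
  have hind : ∀ (x : E) (A : Set Ω) (hA : MeasurableSet A),
      L (indicatorConstLp p hA (measure_ne_top P A) x) = 0 := by
    intro x A hA
    set t : ℝ := (‖x‖ + 1)⁻¹ with ht
    have hden : (0:ℝ) < ‖x‖ + 1 := by positivity
    have htpos : 0 < t := inv_pos.2 hden
    have hkey : L (indicatorConstLp p hA (measure_ne_top P A) (t • x)) = 0 := by
      have hne : eLpNorm (fun ω => ∑ _i : Fin 1, A.indicator (fun _ => t • x) ω) p P ≤ 1 := by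
        have heq : (fun ω => ∑ _i : Fin 1, A.indicator (fun _ => t • x) ω)
            = A.indicator (fun _ => t • x) := by funext ω; simp
        rw [heq, eLpNorm_indicator_const hA hp0 hp']
        have hle : ‖t • x‖ ≤ 1 := by
          rw [norm_smul, Real.norm_eq_abs, abs_of_pos htpos, ht,
            inv_mul_le_iff₀ hden]
          linarith
        calc (‖t • x‖₊ : ℝ≥0∞) * P A ^ (1 / p.toReal)
            ≤ 1 * 1 := by
              refine mul_le_mul ?_ ?_ zero_le zero_le_one
              · exact_mod_cast hle
              · exact ENNReal.rpow_le_one prob_le_one (by positivity)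
          _ = 1 := one_mul 1
      have hd : Pairwise (Function.onFun Disjoint (fun _ : Fin 1 => A)) := Subsingleton.pairwise
      have hb := sum_le_opSemiVar L (fun _ : Fin 1 => A) (fun _ => t • x) (fun _ => hA) hd hne
      rw [hL] at hb
      have hz : (‖L (indicatorConstLp p hA (measure_ne_top P A) (t • x))‖₊ : ℝ≥0∞) = 0 :=
        le_antisymm (by simpa [Fin.sum_univ_one] using hb) zero_le
      simpa using hz
    rw [indicatorConstLp_smul'' hA (measure_ne_top P A) t x, L.map_smul, smul_eq_zero] at hkey
    rcases hkey with h | h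
    · exact absurd h (ne_of_gt htpos)
    · exact h
  have hall : ∀ f : Lp E p P, L f = 0 := by
    refine Lp.induction hp' (fun f : Lp E p P => L f = 0) ?_ ?_ ?_
    · intro c A hA hμA
      rw [Lp.simpleFunc.coe_indicatorConst]
      exact hind c A hA
    · intro f g hf hg _ h1 h2
      rw [L.map_add, h1, h2, add_zero]
    · exact isClosed_eq L.continuous continuous_const
  exact ContinuousLinearMap.ext fun f => by rw [hall f]; simp
end

/-- The space `Λ_p^ℙ(E,F)` of continuous linear operators `L : L^p(Ω,E,ℙ) → F` with
finite `p`-semivariation norm, equipped with `⦀·⦀_{p,ℙ}`, is a Banach space: the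
semivariation norm is subadditive, absolutely homogeneous, definite, and the space is
complete. -/
theorem stmt4 {Ω E F : Type*} [MeasurableSpace Ω] (P : Measure Ω) [IsProbabilityMeasure P]
    [NormedAddCommGroup E] [NormedSpace ℝ E] [TopologicalSpace.SeparableSpace E]
    [NormedAddCommGroup F] [NormedSpace ℝ F] [CompleteSpace F]
    (p : ℝ≥0∞) [Fact (1 ≤ p)] (hp' : p ≠ ∞) :
    (∀ L L' : Lp E p P →L[ℝ] F,
        opSemiVar P p (L + L') ≤ opSemiVar P p L + opSemiVar P p L') ∧
    (∀ (L : Lp E p P →L[ℝ] F) (c : ℝ),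
        opSemiVar P p (c • L) = (‖c‖₊ : ℝ≥0∞) * opSemiVar P p L) ∧
    (∀ L : Lp E p P →L[ℝ] F, opSemiVar P p L = 0 → L = 0) ∧
    (∀ Lseq : ℕ → (Lp E p P →L[ℝ] F),
        (∀ j, opSemiVar P p (Lseq j) < ∞) →
        (∀ ε : ℝ≥0∞, 0 < ε → ∃ N : ℕ, ∀ j k, N ≤ j → N ≤ k →
          opSemiVar P p (Lseq j - Lseq k) < ε) →
        ∃ L : Lp E p P →L[ℝ] F, opSemiVar P p L < ∞ ∧
          Tendsto (fun j => opSemiVar P p (Lseq j - L)) atTop (nhds 0)) := by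
  refine ⟨fun L L' => opSemiVar_add_le L L', fun L c => opSemiVar_smul L c,
    fun L h => opSemiVar_eq_zero_imp hp' L h, ?_⟩
  intro Lseq hfin hcauchy
  -- The sequence is Cauchy in operator norm.
  have hcs : CauchySeq Lseq := by
    rw [Metric.cauchySeq_iff]
    intro ε hε
    obtain ⟨N, hN⟩ := hcauchy (ENNReal.ofReal (ε / 2)) (ENNReal.ofReal_pos.2 (by positivity))
    refine ⟨N, fun j hj k hk => ?_⟩
    rw [dist_eq_norm]
    have h1 := opNorm_le_opSemiVar hp' (Lseq j - Lseq k) (ne_top_of_lt (hN j k hj hk))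
    have h2 : (opSemiVar P p (Lseq j - Lseq k)).toReal ≤ ε / 2 :=
      ENNReal.toReal_le_of_le_ofReal (by positivity) (hN j k hj hk).le
    calc ‖Lseq j - Lseq k‖ ≤ (opSemiVar P p (Lseq j - Lseq k)).toReal := h1
      _ ≤ ε / 2 := h2
      _ < ε := by linarith
  obtain ⟨L, hLlim⟩ := cauchySeq_tendsto_of_complete hcs
  -- Main estimate: for every `ε > 0` there is `N` with `opSemiVar (Lseq j - L) ≤ ε` for `j ≥ N`.
  have hmain : ∀ ε : ℝ≥0∞, 0 < ε → ∃ N : ℕ, ∀ j, N ≤ j → opSemiVar P p (Lseq j - L) ≤ ε := by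
    intro ε hε
    obtain ⟨N, hN⟩ := hcauchy ε hε
    refine ⟨N, fun j hj => ?_⟩
    refine opSemiVar_le fun n As xs hAs hd hn => ?_
    set v : Fin n → Lp E p P :=
      fun i => indicatorConstLp p (hAs i) (measure_ne_top P (As i)) (xs i) with hv
    set B : ℝ≥0∞ := ∑ i, (‖v i‖₊ : ℝ≥0∞) with hB
    by_cases hB0 : B = 0
    · have hall : ∀ i : Fin n, v i = 0 := by
        intro i
        have h := (Finset.sum_eq_zero_iff.1 hB0) i (Finset.mem_univ i)
        have h2 : ‖v i‖₊ = 0 := by exact_mod_cast h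
        rwa [nnnorm_eq_zero] at h2
      have : ∑ i, (‖(Lseq j - L) (v i)‖₊ : ℝ≥0∞) = 0 :=
        Finset.sum_eq_zero fun i _ => by rw [hall i]; simp
      rw [this]
      exact zero_le
    · have hBtop : B ≠ ∞ := by
        rw [hB, ← ENNReal.coe_finset_sum]
        exact ENNReal.coe_ne_top
      refine ENNReal.le_of_forall_pos_le_add fun δ hδ _ => ?_
      -- choose `k ≥ N` with `‖Lseq k - L‖` small
      set δB : ℝ≥0∞ := (δ : ℝ≥0∞) / B with hδB
      have hδB0 : 0 < δB := ENNReal.div_pos (by exact_mod_cast hδ.ne') hBtop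
      have hδBtop : δB ≠ ∞ := by
        rw [hδB]
        exact (ENNReal.div_lt_top ENNReal.coe_ne_top hB0).ne
      have hr : (0:ℝ) < δB.toReal := ENNReal.toReal_pos hδB0.ne' hδBtop
      obtain ⟨M, hM⟩ := (Metric.tendsto_atTop.1 hLlim) δB.toReal hr
      set k := max N M with hk
      have hkN : N ≤ k := le_max_left _ _
      have hdist : ‖Lseq k - L‖ < δB.toReal := by
        have := hM k (le_max_right _ _)
        rwa [dist_eq_norm] at this
      have hnnle : (‖Lseq k - L‖₊ : ℝ≥0∞) ≤ δB := by
        rw [← ENNReal.ofReal_coe_nnreal, coe_nnnorm]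
        exact ENNReal.ofReal_le_of_le_toReal hdist.le
      calc ∑ i, (‖(Lseq j - L) (v i)‖₊ : ℝ≥0∞)
          ≤ ∑ i, ((‖(Lseq j - Lseq k) (v i)‖₊ : ℝ≥0∞) + (‖(Lseq k - L) (v i)‖₊ : ℝ≥0∞)) := by
            refine Finset.sum_le_sum fun i _ => ?_
            have hsplit : (Lseq j - L) (v i) = (Lseq j - Lseq k) (v i) + (Lseq k - L) (v i) := by
              simp only [ContinuousLinearMap.sub_apply]
              abel
            rw [hsplit, ← ENNReal.coe_add]
            exact ENNReal.coe_le_coe.2 (nnnorm_add_le _ _)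
        _ = (∑ i, (‖(Lseq j - Lseq k) (v i)‖₊ : ℝ≥0∞))
              + ∑ i, (‖(Lseq k - L) (v i)‖₊ : ℝ≥0∞) := Finset.sum_add_distrib
        _ ≤ ε + δ := by
            refine add_le_add ?_ ?_
            · exact (sum_le_opSemiVar (Lseq j - Lseq k) As xs hAs hd hn).trans
                (hN j k hj hkN).le
            · calc ∑ i, (‖(Lseq k - L) (v i)‖₊ : ℝ≥0∞)
                  ≤ ∑ i, (‖Lseq k - L‖₊ : ℝ≥0∞) * (‖v i‖₊ : ℝ≥0∞) := by
                    refine Finset.sum_le_sum fun i _ => ?_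
                    rw [← ENNReal.coe_mul]
                    exact ENNReal.coe_le_coe.2 ((Lseq k - L).le_opNNNorm (v i))
                _ = (‖Lseq k - L‖₊ : ℝ≥0∞) * B := by rw [hB, Finset.mul_sum]
                _ ≤ δB * B := mul_le_mul_left hnnle _
                _ = δ := by
                    rw [hδB, ENNReal.div_mul_cancel hB0 hBtop]
  -- conclude
  have htend : Tendsto (fun j => opSemiVar P p (Lseq j - L)) atTop (nhds 0) := by
    rw [ENNReal.tendsto_atTop_zero]
    intro ε hε
    obtain ⟨N, hN⟩ := hmain ε hε
    exact ⟨N, fun j hj => hN j hj⟩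
  refine ⟨L, ?_, htend⟩
  obtain ⟨N, hN⟩ := hmain 1 zero_lt_one
  have hLle : opSemiVar P p L ≤ opSemiVar P p (L - Lseq N) + opSemiVar P p (Lseq N) := by
    have := opSemiVar_add_le (L - Lseq N) (Lseq N)
    rwa [sub_add_cancel] at this
  have h1 : opSemiVar P p (L - Lseq N) = opSemiVar P p (Lseq N - L) := by
    rw [← opSemiVar_neg (Lseq N - L), neg_sub]
  calc opSemiVar P p L ≤ opSemiVar P p (L - Lseq N) + opSemiVar P p (Lseq N) := hLle
    _ ≤ 1 + opSemiVar P p (Lseq N) := by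
        rw [h1]; exact add_le_add_left (hN N le_rfl) _
    _ < ∞ := by
        rw [ENNReal.add_lt_top]
        exact ⟨ENNReal.one_lt_top, hfin N⟩
end
end

section
/- Let 1 ≤ p < ∞, 1/p + 1/q = 1, E, F Banach spaces with E separable, and m : F → L(E,F) a countably additive vector measure of finite variation with |m| absolutely continuous with respect to ℙ. If the Radon–Nikodym derivative of |m| with respect to ℙ is g (i.e. |m| = g dℙ) and A ∈ F satisfies m̄_q(A) < ∞, then g·1_A ∈ L^q(Ω,ℙ) and m̄_q(A) = (∫ |g|^q 1_A dℙ)^{1/q}. -/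
open MeasureTheory ENNReal Filter
open NNReal

noncomputable section

/-- Countable additivity of a vector-valued set function. -/
def CountablyAdditiveM {Ω X : Type*} [MeasurableSpace Ω] [NormedAddCommGroup X]
    (m : Set Ω → X) : Prop :=
  ∀ As : ℕ → Set Ω, (∀ i, MeasurableSet (As i)) → Pairwise (Function.onFun Disjoint As) →
    Tendsto (fun n => ∑ i ∈ Finset.range n, m (As i)) atTop (nhds (m (⋃ i, As i)))

/-- Total variation of a vector-valued set function over disjoint measurable subsets. -/
def varM {Ω X : Type*} [MeasurableSpace Ω] [NormedAddCommGroup X]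
    (m : Set Ω → X) (A : Set Ω) : ℝ≥0∞ :=
  ⨆ (n : ℕ) (As : Fin n → Set Ω) (_ : ∀ i, MeasurableSet (As i))
    (_ : Pairwise (Function.onFun Disjoint As)) (_ : ∀ i, As i ⊆ A),
    ∑ i, (‖m (As i)‖₊ : ℝ≥0∞)

/-- The `q`-variation of `m` relative to `ℙ`, indexed by the conjugate (constraint)
exponent `p` (`1/p + 1/q = 1`). -/
def qVar {Ω E F : Type*} [MeasurableSpace Ω] [NormedAddCommGroup E] [NormedSpace ℝ E]
    [NormedAddCommGroup F] [NormedSpace ℝ F]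
    (P : Measure Ω) (m : Set Ω → (E →L[ℝ] F)) (p : ℝ≥0∞) (A : Set Ω) : ℝ≥0∞ :=
  ⨆ (n : ℕ) (As : Fin n → Set Ω) (xs : Fin n → E) (_ : ∀ i, MeasurableSet (As i))
    (_ : Pairwise (Function.onFun Disjoint As)) (_ : ∀ i, As i ⊆ A)
    (_ : eLpNorm (fun ω => ∑ i, (As i).indicator (fun _ => xs i) ω) p P ≤ 1),
    ∑ i, (‖m (As i) (xs i)‖₊ : ℝ≥0∞)

section Aux
variable {Ω E F : Type*} [MeasurableSpace Ω] [NormedAddCommGroup E] [NormedSpace ℝ E]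
    [NormedAddCommGroup F] [NormedSpace ℝ F]

lemma sum_indicator_nnnorm {Ω X : Type*} [NormedAddCommGroup X] {n : ℕ}
    {As : Fin n → Set Ω} (hdisj : Pairwise (Function.onFun Disjoint As)) (xs : Fin n → X) (ω : Ω) :
    (‖∑ i, (As i).indicator (fun _ => xs i) ω‖₊ : ℝ≥0∞)
      = ∑ i, (As i).indicator (fun _ => (‖xs i‖₊ : ℝ≥0∞)) ω := by
  by_cases hω : ∃ i, ω ∈ As i
  · obtain ⟨i₀, hi₀⟩ := hω
    have hnot : ∀ j, j ≠ i₀ → ω ∉ As j := fun j hj hmem =>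
      Set.disjoint_left.mp (hdisj hj) hmem hi₀
    have h1 : ∑ i, (As i).indicator (fun _ => xs i) ω = xs i₀ := by
      rw [Finset.sum_eq_single i₀]
      · exact Set.indicator_of_mem hi₀ _
      · intro j _ hj; exact Set.indicator_of_notMem (hnot j hj) _
      · intro h; exact absurd (Finset.mem_univ i₀) h
    have h2 : ∑ i, (As i).indicator (fun _ => (‖xs i‖₊ : ℝ≥0∞)) ω = (‖xs i₀‖₊ : ℝ≥0∞) := by
      rw [Finset.sum_eq_single i₀]
      · exact Set.indicator_of_mem hi₀ _
      · intro j _ hj; exact Set.indicator_of_notMem (hnot j hj) _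
      · intro h; exact absurd (Finset.mem_univ i₀) h
    rw [h1, h2]
  · push_neg at hω
    have h1 : ∑ i, (As i).indicator (fun _ => xs i) ω = 0 :=
      Finset.sum_eq_zero fun i _ => Set.indicator_of_notMem (hω i) _
    have h2 : ∑ i, (As i).indicator (fun _ => (‖xs i‖₊ : ℝ≥0∞)) ω = 0 :=
      Finset.sum_eq_zero fun i _ => Set.indicator_of_notMem (hω i) _
    simp [h1, h2]

lemma map_sum_indicator {Ω : Type*} {n : ℕ} {As : Fin n → Set Ω}
    (hdisj : Pairwise (Function.onFun Disjoint As)) (cs : Fin n → ℝ≥0∞) (f : ℝ≥0∞ → ℝ≥0∞)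
    (hf : f 0 = 0) (ω : Ω) :
    f (∑ i, (As i).indicator (fun _ => cs i) ω)
      = ∑ i, (As i).indicator (fun _ => f (cs i)) ω := by
  by_cases hω : ∃ i, ω ∈ As i
  · obtain ⟨i₀, hi₀⟩ := hω
    have hnot : ∀ j, j ≠ i₀ → ω ∉ As j := fun j hj hmem =>
      Set.disjoint_left.mp (hdisj hj) hmem hi₀
    have h1 : ∑ i, (As i).indicator (fun _ => cs i) ω = cs i₀ := by
      rw [Finset.sum_eq_single i₀]
      · exact Set.indicator_of_mem hi₀ _
      · intro j _ hj; exact Set.indicator_of_notMem (hnot j hj) _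
      · intro h; exact absurd (Finset.mem_univ i₀) h
    have h2 : ∑ i, (As i).indicator (fun _ => f (cs i)) ω = f (cs i₀) := by
      rw [Finset.sum_eq_single i₀]
      · exact Set.indicator_of_mem hi₀ _
      · intro j _ hj; exact Set.indicator_of_notMem (hnot j hj) _
      · intro h; exact absurd (Finset.mem_univ i₀) h
    rw [h1, h2]
  · push_neg at hω
    have h1 : ∑ i, (As i).indicator (fun _ => cs i) ω = 0 :=
      Finset.sum_eq_zero fun i _ => Set.indicator_of_notMem (hω i) _
    have h2 : ∑ i, (As i).indicator (fun _ => f (cs i)) ω = 0 :=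
      Finset.sum_eq_zero fun i _ => Set.indicator_of_notMem (hω i) _
    rw [h1, h2, hf]

lemma lintegral_sum_indicator_mul {Ω : Type*} [MeasurableSpace Ω] (P : Measure Ω) {n : ℕ}
    {As : Fin n → Set Ω} (hAs : ∀ i, MeasurableSet (As i)) (cs : Fin n → ℝ≥0∞)
    {G : Ω → ℝ≥0∞} (hG : Measurable G) :
    ∫⁻ ω, (∑ i, (As i).indicator (fun _ => cs i) ω) * G ω ∂P
      = ∑ i, cs i * ∫⁻ ω in As i, G ω ∂P := by
  have hpt : ∀ ω, (∑ i, (As i).indicator (fun _ => cs i) ω) * G ω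
      = ∑ i, (As i).indicator (fun w => cs i * G w) ω := by
    intro ω
    rw [Finset.sum_mul]
    refine Finset.sum_congr rfl fun i _ => ?_
    by_cases h : ω ∈ As i
    · simp [Set.indicator_of_mem h]
    · simp [Set.indicator_of_notMem h]
  simp only [hpt]
  rw [lintegral_finset_sum]
  · refine Finset.sum_congr rfl fun i _ => ?_
    rw [lintegral_indicator (hAs i), lintegral_const_mul _ hG]
  · exact fun i _ => ((measurable_const.mul hG).indicator (hAs i))

lemma lintegral_sum_indicator_rpow {Ω : Type*} [MeasurableSpace Ω] (P : Measure Ω) {n : ℕ}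
    {As : Fin n → Set Ω} (hAs : ∀ i, MeasurableSet (As i))
    (hdisj : Pairwise (Function.onFun Disjoint As)) (cs : Fin n → ℝ≥0∞) {r : ℝ} (hr : 0 < r) :
    ∫⁻ ω, (∑ i, (As i).indicator (fun _ => cs i) ω) ^ r ∂P
      = ∑ i, cs i ^ r * P (As i) := by
  have hpt : ∀ ω, (∑ i, (As i).indicator (fun _ => cs i) ω) ^ r
      = ∑ i, (As i).indicator (fun _ => cs i ^ r) ω :=
    map_sum_indicator hdisj cs (fun x => x ^ r) (ENNReal.zero_rpow_of_pos hr)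
  simp only [hpt]
  rw [lintegral_finset_sum]
  · exact Finset.sum_congr rfl fun i _ => lintegral_indicator_const (hAs i) _
  · exact fun i _ => measurable_const.indicator (hAs i)

lemma nnnorm_le_varM {Ω X : Type*} [MeasurableSpace Ω] [NormedAddCommGroup X]
    (m : Set Ω → X) {B : Set Ω} (hB : MeasurableSet B) :
    (‖m B‖₊ : ℝ≥0∞) ≤ varM m B := by
  have h : (‖m B‖₊ : ℝ≥0∞) = ∑ _i : Fin 1, (‖m ((fun _ => B) 0)‖₊ : ℝ≥0∞) := by simp
  rw [h, varM]
  refine le_iSup_of_le 1 ?_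
  refine le_iSup_of_le (fun _ => B) ?_
  refine le_iSup_of_le (fun _ => hB) ?_
  refine le_iSup_of_le (by intro i j hij; exact absurd (Subsingleton.elim i j) hij) ?_
  exact le_iSup_of_le (fun _ => subset_rfl) le_rfl

lemma exists_near_opNorm {E F : Type*} [NormedAddCommGroup E] [NormedSpace ℝ E]
    [NormedAddCommGroup F] [NormedSpace ℝ F] (T : E →L[ℝ] F) (η : ℝ≥0∞) (hη : 0 < η)
    (hη' : η ≠ ∞) : ∃ x : E, ‖x‖ ≤ 1 ∧ (‖T‖₊ : ℝ≥0∞) ≤ (‖T x‖₊ : ℝ≥0∞) + η := by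
  by_cases hr : ‖T‖ ≤ η.toReal
  · refine ⟨0, by simp, ?_⟩
    calc (‖T‖₊ : ℝ≥0∞) = ENNReal.ofReal ‖T‖ := (ofReal_norm _).symm
      _ ≤ ENNReal.ofReal η.toReal := ENNReal.ofReal_le_ofReal hr
      _ = η := ENNReal.ofReal_toReal hη'
      _ ≤ _ := le_add_self
  · push_neg at hr
    have hηpos : 0 < η.toReal := ENNReal.toReal_pos hη.ne' hη'
    obtain ⟨x, hx1, hx2⟩ := T.exists_lt_apply_of_lt_opNorm
      (show ‖T‖ - η.toReal < ‖T‖ by linarith)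
    refine ⟨x, hx1.le, ?_⟩
    have : ‖T‖ ≤ ‖T x‖ + η.toReal := by linarith
    calc (‖T‖₊ : ℝ≥0∞) = ENNReal.ofReal ‖T‖ := (ofReal_norm _).symm
      _ ≤ ENNReal.ofReal (‖T x‖ + η.toReal) := ENNReal.ofReal_le_ofReal this
      _ = ENNReal.ofReal ‖T x‖ + ENNReal.ofReal η.toReal :=
          ENNReal.ofReal_add (norm_nonneg _) hηpos.le
      _ = (‖T x‖₊ : ℝ≥0∞) + η := by rw [ofReal_norm, enorm_eq_nnnorm, ENNReal.ofReal_toReal hη']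

lemma qVar_ge {Ω E F : Type*} [MeasurableSpace Ω] [NormedAddCommGroup E] [NormedSpace ℝ E]
    [NormedAddCommGroup F] [NormedSpace ℝ F]
    (P : Measure Ω) (m : Set Ω → (E →L[ℝ] F)) (p : ℝ≥0∞) (A : Set Ω)
    {n k : ℕ} (Bs : Fin n → Fin k → Set Ω) (ys : Fin n → Fin k → E)
    (hmeas : ∀ i j, MeasurableSet (Bs i j))
    (hdisj : ∀ (i j i' j' : _), (i, j) ≠ (i', j') → Disjoint (Bs i j) (Bs i' j'))
    (hsub : ∀ i j, Bs i j ⊆ A)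
    (hcon : eLpNorm (fun ω => ∑ i, ∑ j, (Bs i j).indicator (fun _ => ys i j) ω) p P ≤ 1) :
    ∑ i, ∑ j, (‖m (Bs i j) (ys i j)‖₊ : ℝ≥0∞) ≤ qVar P m p A := by
  set e := finProdFinEquiv (m := n) (n := k)
  have hsum : ∀ (f : Fin n → Fin k → ℝ≥0∞),
      ∑ l : Fin (n * k), f (e.symm l).1 (e.symm l).2 = ∑ i, ∑ j, f i j := by
    intro f
    rw [show (∑ i, ∑ j, f i j) = ∑ pr : Fin n × Fin k, f pr.1 pr.2 from
      (Fintype.sum_prod_type (f := fun pr : Fin n × Fin k => f pr.1 pr.2)).symm]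
    exact Equiv.sum_comp e.symm (fun pr => f pr.1 pr.2)
  have hsumE : ∀ (f : Fin n → Fin k → Ω → E) (ω : Ω),
      ∑ l : Fin (n * k), f (e.symm l).1 (e.symm l).2 ω = ∑ i, ∑ j, f i j ω := by
    intro f ω
    rw [show (∑ i, ∑ j, f i j ω) = ∑ pr : Fin n × Fin k, f pr.1 pr.2 ω from
      (Fintype.sum_prod_type (f := fun pr : Fin n × Fin k => f pr.1 pr.2 ω)).symm]
    exact Equiv.sum_comp e.symm (fun pr => f pr.1 pr.2 ω)
  rw [← hsum]
  rw [qVar]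
  refine le_iSup_of_le (n * k) ?_
  refine le_iSup_of_le (fun l => Bs (e.symm l).1 (e.symm l).2) ?_
  refine le_iSup_of_le (fun l => ys (e.symm l).1 (e.symm l).2) ?_
  refine le_iSup_of_le (fun l => hmeas _ _) ?_
  refine le_iSup_of_le ?_ ?_
  · intro l l' hll
    refine hdisj _ _ _ _ ?_
    intro hcontra
    exact hll (by
      have := congrArg e (show e.symm l = e.symm l' from Prod.ext
        (congrArg Prod.fst hcontra) (congrArg Prod.snd hcontra))
      simpa using this)
  refine le_iSup_of_le (fun l => hsub _ _) ?_
  refine le_iSup_of_le ?_ le_rfl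
  have : (fun ω => ∑ l : Fin (n * k),
      (Bs (e.symm l).1 (e.symm l).2).indicator (fun _ => ys (e.symm l).1 (e.symm l).2) ω)
      = fun ω => ∑ i, ∑ j, (Bs i j).indicator (fun _ => ys i j) ω := by
    funext ω
    exact hsumE (fun i j ω => (Bs i j).indicator (fun _ => ys i j) ω) ω
  rw [this]
  exact hcon

lemma sum_varM_le_qVar (P : Measure Ω) (p : ℝ≥0∞) (m : Set Ω → (E →L[ℝ] F))
    (hfinvar : ∀ B : Set Ω, MeasurableSet B → varM m B < ∞)
    (A : Set Ω) {n : ℕ} {As : Fin n → Set Ω} {cs : Fin n → ℝ≥0}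
    (hAs : ∀ i, MeasurableSet (As i)) (hdisj : Pairwise (Function.onFun Disjoint As))
    (hsub : ∀ i, As i ⊆ A)
    (hcon : eLpNorm (fun ω => ∑ i, (As i).indicator (fun _ => (cs i : ℝ)) ω) p P ≤ 1) :
    ∑ i, (cs i : ℝ≥0∞) * varM m (As i) ≤ qVar P m p A := by
  refine ENNReal.le_of_forall_pos_le_add fun ε hε _hqfin => ?_
  set C : ℝ≥0 := ∑ i, cs i with hC
  set δ : ℝ≥0 := ε / (2 * C + 1) with hδdef
  have hδ : 0 < δ := by
    apply div_pos hε
    positivity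
  suffices h : ∑ i, (cs i : ℝ≥0∞) * varM m (As i) ≤ qVar P m p A + (C : ℝ≥0∞) * (2 * δ) by
    refine h.trans (add_le_add_right ?_ _)
    have h1 : (C : ℝ≥0∞) * (2 * (δ : ℝ≥0∞)) = ((C * (2 * δ) : ℝ≥0) : ℝ≥0∞) := by push_cast; ring
    rw [h1]
    apply ENNReal.coe_le_coe.mpr
    calc C * (2 * δ) = (2 * C) * δ := by ring
      _ ≤ (2 * C + 1) * δ := mul_le_mul_left le_self_add δ
      _ = ε := by rw [hδdef, mul_comm]; exact div_mul_cancel₀ _ (by positivity)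
  -- step 1: near-optimal partitions
  have Hpart : ∀ i, ∃ (kk : ℕ) (Bs : Fin kk → Set Ω), (∀ j, MeasurableSet (Bs j)) ∧
      Pairwise (Function.onFun Disjoint Bs) ∧ (∀ j, Bs j ⊆ As i) ∧
      varM m (As i) ≤ (∑ j, (‖m (Bs j)‖₊ : ℝ≥0∞)) + δ := by
    intro i
    by_cases hv : varM m (As i) ≤ (δ : ℝ≥0∞)
    · exact ⟨0, Fin.elim0, fun j => j.elim0, fun a b h => a.elim0, fun j => j.elim0,
        by simpa using hv⟩
    · push_neg at hv
      have hlt : varM m (As i) - δ < varM m (As i) :=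
        ENNReal.sub_lt_self (hfinvar _ (hAs i)).ne
          (lt_of_le_of_lt (zero_le) hv).ne' (by exact_mod_cast hδ.ne')
      rw [varM] at hlt
      simp only [lt_iSup_iff] at hlt
      obtain ⟨kk, Bs, h1, h2, h3, hlt⟩ := hlt
      refine ⟨kk, Bs, h1, h2, h3, le_of_lt ?_⟩
      exact (ENNReal.sub_lt_iff_lt_right ENNReal.coe_ne_top hv.le).mp hlt
  choose kf Bs hBmeas hBdisj hBsub hBsum using Hpart
  -- step 2: near-optimal vectors
  have Hvec : ∀ i (j : Fin (kf i)), ∃ x : E, ‖x‖ ≤ 1 ∧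
      (‖m (Bs i j)‖₊ : ℝ≥0∞) ≤ (‖m (Bs i j) x‖₊ : ℝ≥0∞) + δ / (kf i) := by
    intro i j
    have hk0 : (kf i : ℝ≥0∞) ≠ 0 := by
      simp only [ne_eq, Nat.cast_eq_zero]
      exact Nat.pos_of_ne_zero (fun h => (h ▸ j).elim0) |>.ne'
    refine exists_near_opNorm _ _ ?_ ?_
    · exact ENNReal.div_pos (by exact_mod_cast hδ.ne') (ENNReal.natCast_ne_top _)
    · exact (ENNReal.div_lt_top ENNReal.coe_ne_top hk0).ne
  choose xs hx1 hx2 using Hvec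
  -- step 3
  have Hi : ∀ i, varM m (As i) ≤ (∑ j, (‖m (Bs i j) (xs i j)‖₊ : ℝ≥0∞)) + 2 * δ := by
    intro i
    refine (hBsum i).trans ?_
    have h1 : ∑ j, (‖m (Bs i j)‖₊ : ℝ≥0∞)
        ≤ ∑ j, ((‖m (Bs i j) (xs i j)‖₊ : ℝ≥0∞) + δ / (kf i)) :=
      Finset.sum_le_sum fun j _ => hx2 i j
    have h2 : ∑ j, ((‖m (Bs i j) (xs i j)‖₊ : ℝ≥0∞) + δ / (kf i))
        = (∑ j, (‖m (Bs i j) (xs i j)‖₊ : ℝ≥0∞)) + (kf i) * ((δ : ℝ≥0∞) / (kf i)) := by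
      rw [Finset.sum_add_distrib, Finset.sum_const, Finset.card_univ]
      simp [nsmul_eq_mul]
    have h3 : (kf i : ℝ≥0∞) * ((δ : ℝ≥0∞) / (kf i)) ≤ δ := ENNReal.mul_div_le
    calc (∑ j, (‖m (Bs i j)‖₊ : ℝ≥0∞)) + (δ : ℝ≥0∞)
        ≤ ((∑ j, (‖m (Bs i j) (xs i j)‖₊ : ℝ≥0∞)) + (kf i) * ((δ : ℝ≥0∞) / (kf i))) + δ := by
          rw [← h2]; exact add_le_add_left h1 _
      _ ≤ ((∑ j, (‖m (Bs i j) (xs i j)‖₊ : ℝ≥0∞)) + δ) + δ := by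
          exact add_le_add_left (add_le_add_right h3 _) _
      _ = (∑ j, (‖m (Bs i j) (xs i j)‖₊ : ℝ≥0∞)) + 2 * δ := by ring
  -- padding
  set k : ℕ := Finset.univ.sup kf with hk
  have hkf : ∀ i, kf i ≤ k := fun i => Finset.le_sup (Finset.mem_univ i)
  set Bp : Fin n → Fin k → Set Ω :=
    fun i j => if h : (j : ℕ) < kf i then Bs i ⟨j, h⟩ else ∅ with hBp
  set yp : Fin n → Fin k → E :=
    fun i j => if h : (j : ℕ) < kf i then (cs i : ℝ) • xs i ⟨j, h⟩ else 0 with hyp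
  have hBpsub : ∀ i j, Bp i j ⊆ As i := by
    intro i j
    by_cases h : (j : ℕ) < kf i
    · simp only [hBp, dif_pos h]; exact hBsub i _
    · simp only [hBp, dif_neg h]; exact Set.empty_subset _
  have hBpmeas : ∀ i j, MeasurableSet (Bp i j) := by
    intro i j
    by_cases h : (j : ℕ) < kf i
    · simp only [hBp, dif_pos h]; exact hBmeas i _
    · simp only [hBp, dif_neg h]; exact MeasurableSet.empty
  have hBpdisj : ∀ (i : Fin n) (j : Fin k) (i' : Fin n) (j' : Fin k),
      (i, j) ≠ (i', j') → Disjoint (Bp i j) (Bp i' j') := by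
    intro i j i' j' hne
    by_cases h : (j : ℕ) < kf i
    · by_cases h' : (j' : ℕ) < kf i'
      · simp only [hBp, dif_pos h, dif_pos h']
        rcases eq_or_ne i i' with rfl | hii
        · have hjj : j ≠ j' := fun hj => hne (by rw [hj])
          exact hBdisj i (by
            intro hcontra
            exact hjj (Fin.ext (by simpa using congrArg Fin.val hcontra)))
        · exact Set.disjoint_of_subset (hBsub i _) (hBsub i' _) (hdisj hii)
      · simp only [hBp, dif_pos h, dif_neg h']; exact Set.disjoint_empty _
    · simp only [hBp, dif_neg h]; exact Set.empty_disjoint _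
  -- padded sums agree
  have hpad : ∀ i, ∑ j, (‖m (Bs i j) (xs i j)‖₊ : ℝ≥0∞) * (cs i : ℝ≥0∞)
      = ∑ j : Fin k, (‖m (Bp i j) (yp i j)‖₊ : ℝ≥0∞) := by
    intro i
    set FN : ℕ → ℝ≥0∞ := fun jn =>
      if h : jn < kf i then (‖m (Bs i ⟨jn, h⟩) ((cs i : ℝ) • xs i ⟨jn, h⟩)‖₊ : ℝ≥0∞) else 0
      with hFN
    have e1 : ∑ j, (‖m (Bs i j) (xs i j)‖₊ : ℝ≥0∞) * (cs i : ℝ≥0∞)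
        = ∑ j : Fin (kf i), FN j := by
      refine Finset.sum_congr rfl fun j _ => ?_
      have : FN (j : ℕ) = (‖m (Bs i j) ((cs i : ℝ) • xs i j)‖₊ : ℝ≥0∞) := by
        rw [hFN]; simp only [dif_pos j.isLt, Fin.eta]
      rw [this, ContinuousLinearMap.map_smul, nnnorm_smul]
      push_cast
      rw [NNReal.nnnorm_eq]
      ring
    have e2 : ∑ j : Fin (kf i), FN j = ∑ jn ∈ Finset.range (kf i), FN jn :=
      Fin.sum_univ_eq_sum_range FN (kf i)
    have e3 : ∑ jn ∈ Finset.range (kf i), FN jn = ∑ jn ∈ Finset.range k, FN jn := by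
      refine Finset.sum_subset (Finset.range_subset_range.mpr (hkf i)) fun x _ hx => ?_
      rw [hFN]
      exact dif_neg (by simpa using hx)
    have e4 : ∑ jn ∈ Finset.range k, FN jn = ∑ j : Fin k, FN j :=
      (Fin.sum_univ_eq_sum_range FN k).symm
    have e5 : ∑ j : Fin k, FN j = ∑ j : Fin k, (‖m (Bp i j) (yp i j)‖₊ : ℝ≥0∞) := by
      refine Finset.sum_congr rfl fun j _ => ?_
      by_cases h : (j : ℕ) < kf i
      · rw [hFN]; simp only [hBp, hyp, dif_pos h]
      · rw [hFN]; simp only [hBp, hyp, dif_neg h, map_zero, nnnorm_zero]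
        simp
    rw [e1, e2, e3, e4, e5]
  -- constraint for padded family
  have hcon' : eLpNorm (fun ω => ∑ i, ∑ j, (Bp i j).indicator (fun _ => yp i j) ω) p P ≤ 1 := by
    refine le_trans (eLpNorm_mono fun ω => ?_) hcon
    have hRHS : ‖∑ i, (As i).indicator (fun _ => (cs i : ℝ)) ω‖
        = ∑ i, (As i).indicator (fun _ => (cs i : ℝ)) ω :=
      Real.norm_of_nonneg (Finset.sum_nonneg fun i _ =>
        Set.indicator_nonneg (fun _ _ => (cs i).coe_nonneg) ω)
    rw [hRHS]
    refine (norm_sum_le _ _).trans (Finset.sum_le_sum fun i _ => ?_)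
    by_cases hmem : ∃ j, ω ∈ Bp i j
    · obtain ⟨j₀, hj₀⟩ := hmem
      have hrange : (j₀ : ℕ) < kf i := by
        by_contra h
        rw [hBp] at hj₀; simp only [dif_neg h] at hj₀; exact hj₀
      have hωA : ω ∈ As i := hBpsub i j₀ hj₀
      have hsum0 : ∑ j, (Bp i j).indicator (fun _ => yp i j) ω = yp i j₀ := by
        rw [Finset.sum_eq_single j₀]
        · exact Set.indicator_of_mem hj₀ _
        · intro j _ hj
          refine Set.indicator_of_notMem (fun hmem' => ?_) _
          exact Set.disjoint_left.mp
            (hBpdisj i j i j₀ (fun hc => hj (by simpa using congrArg Prod.snd hc))) hmem' hj₀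
        · intro h; exact absurd (Finset.mem_univ j₀) h
      rw [hsum0, Set.indicator_of_mem hωA]
      have : ‖yp i j₀‖ ≤ (cs i : ℝ) := by
        rw [hyp]; simp only [dif_pos hrange]
        rw [norm_smul, Real.norm_of_nonneg (cs i).coe_nonneg]
        calc (cs i : ℝ) * ‖xs i ⟨j₀, hrange⟩‖ ≤ (cs i : ℝ) * 1 := by
              exact mul_le_mul_of_nonneg_left (hx1 i _) (cs i).coe_nonneg
          _ = (cs i : ℝ) := mul_one _
      exact this
    · push_neg at hmem
      have hsum0 : ∑ j, (Bp i j).indicator (fun _ => yp i j) ω = 0 :=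
        Finset.sum_eq_zero fun j _ => Set.indicator_of_notMem (hmem j) _
      rw [hsum0, norm_zero]
      exact Set.indicator_nonneg (fun _ _ => (cs i).coe_nonneg) ω
  -- assemble
  have hmain := qVar_ge P m p A Bp yp hBpmeas hBpdisj
    (fun i j => (hBpsub i j).trans (hsub i)) hcon'
  calc ∑ i, (cs i : ℝ≥0∞) * varM m (As i)
      ≤ ∑ i, (cs i : ℝ≥0∞) * ((∑ j, (‖m (Bs i j) (xs i j)‖₊ : ℝ≥0∞)) + 2 * δ) :=
        Finset.sum_le_sum fun i _ => mul_le_mul_of_nonneg_left (Hi i) (zero_le)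
    _ = ∑ i, ((∑ j, (‖m (Bs i j) (xs i j)‖₊ : ℝ≥0∞) * (cs i : ℝ≥0∞))
          + (cs i : ℝ≥0∞) * (2 * δ)) := by
        refine Finset.sum_congr rfl fun i _ => ?_
        rw [mul_add, Finset.mul_sum]
        congr 1
        · exact Finset.sum_congr rfl fun j _ => mul_comm _ _
    _ = (∑ i, ∑ j : Fin k, (‖m (Bp i j) (yp i j)‖₊ : ℝ≥0∞)) + ∑ i, (cs i : ℝ≥0∞) * (2 * δ) := by
        rw [Finset.sum_add_distrib]
        congr 1
        exact Finset.sum_congr rfl fun i _ => hpad i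
    _ ≤ qVar P m p A + (C : ℝ≥0∞) * (2 * δ) := by
        refine add_le_add hmain ?_
        rw [← Finset.sum_mul, hC]
        push_cast
        exact le_rfl

lemma eLpNorm_sum_indicator_eq {Ω : Type*} [MeasurableSpace Ω] (P : Measure Ω) {n : ℕ}
    {As : Fin n → Set Ω} (hdisj : Pairwise (Function.onFun Disjoint As)) (cs : Fin n → ℝ≥0)
    {p : ℝ≥0∞} (hp0 : p ≠ 0) (hp' : p ≠ ∞) :
    eLpNorm (fun ω => ∑ i, (As i).indicator (fun _ => (cs i : ℝ)) ω) p P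
      = (∫⁻ ω, (∑ i, (As i).indicator (fun _ => (cs i : ℝ≥0∞)) ω) ^ p.toReal ∂P)
          ^ (1 / p.toReal) := by
  rw [eLpNorm_eq_lintegral_rpow_enorm_toReal hp0 hp']
  congr 1
  refine lintegral_congr fun ω => ?_
  congr 1
  rw [enorm_eq_nnnorm, sum_indicator_nnnorm hdisj (fun i => (cs i : ℝ)) ω]
  refine Finset.sum_congr rfl fun i _ => ?_
  congr 1
  ext x
  simp [NNReal.nnnorm_eq]

lemma simple_rpow_le_qVar (P : Measure Ω) [IsProbabilityMeasure P] (p : ℝ≥0∞)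
    (m : Set Ω → (E →L[ℝ] F))
    (hfinvar : ∀ B : Set Ω, MeasurableSet B → varM m B < ∞)
    (A : Set Ω)
    (hfun : Ω → ℝ≥0∞) (hzero : ∀ ω, ω ∉ A → hfun ω = 0) (hfin' : ∀ ω, hfun ω ≠ ∞)
    (hvar : ∀ B : Set Ω, MeasurableSet B → B ⊆ A → varM m B = ∫⁻ ω in B, hfun ω ∂P)
    {qr : ℝ} (hconj : Real.HolderConjugate p.toReal qr) (hp0 : p ≠ 0) (hptop : p ≠ ∞)
    (φ : SimpleFunc Ω ℝ≥0∞) (hφle : ∀ a, φ a ≤ hfun a) :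
    (∫⁻ a, φ a ^ qr ∂P) ^ (1 / qr) ≤ qVar P m p A := by
  set pr := p.toReal with hpr
  have hqr1 : 1 < qr := hconj.symm.lt
  have hqr0 : 0 < qr := lt_trans zero_lt_one hqr1
  have hpr0 : 0 < pr := hconj.pos
  set I := ∫⁻ a, φ a ^ qr ∂P with hI
  by_cases hI0 : I = 0
  · rw [hI0, ENNReal.zero_rpow_of_pos (by positivity)]
    exact zero_le
  -- decompose φ
  set s : Finset ℝ≥0∞ := φ.range.erase 0 with hs
  set n := s.card with hn
  set e := s.equivFin with he
  set v : Fin n → ℝ≥0∞ := fun i => (e.symm i : ℝ≥0∞) with hv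
  have hvmem : ∀ i, v i ∈ s := fun i => (e.symm i).2
  have hv0 : ∀ i, v i ≠ 0 := fun i => Finset.ne_of_mem_erase (hvmem i)
  have hvrange : ∀ i, v i ∈ Set.range φ := fun i =>
    SimpleFunc.mem_range.mp (Finset.mem_of_mem_erase (hvmem i))
  have hvfin : ∀ i, v i ≠ ∞ := by
    intro i
    obtain ⟨a, ha⟩ := hvrange i
    rw [← ha]
    exact fun h => hfin' a (le_antisymm (le_top) (h ▸ hφle a) ▸ rfl) |>.elim
  have hinj : Function.Injective v := by
    intro i j hij
    have : e.symm i = e.symm j := Subtype.ext hij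
    simpa using congrArg e this
  set As : Fin n → Set Ω := fun i => φ ⁻¹' {v i} with hAs'
  have hAs : ∀ i, MeasurableSet (As i) := fun i => φ.measurableSet_fiber (v i)
  have hdisj : Pairwise (Function.onFun Disjoint As) := by
    intro i j hij
    simp only [Function.onFun, hAs']
    rw [Set.disjoint_left]
    rintro a (ha : φ a = v i) (hb : φ a = v j)
    exact hij (hinj (ha ▸ hb))
  have hsubA : ∀ i, As i ⊆ A := by
    intro i a ha
    by_contra hmem
    have h1 : φ a = v i := ha
    have := hφle a
    rw [h1, hzero a hmem] at this
    exact hv0 i (le_antisymm this (zero_le))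
  have hrep : ∀ a, φ a = ∑ i, (As i).indicator (fun _ => v i) a := by
    intro a
    by_cases h0 : φ a = 0
    · rw [h0]
      symm
      refine Finset.sum_eq_zero fun i _ => Set.indicator_of_notMem (fun hmem => ?_) _
      exact hv0 i ((show φ a = v i from hmem) ▸ h0)
    · have hmem : φ a ∈ s := Finset.mem_erase.mpr ⟨h0, SimpleFunc.mem_range_self φ a⟩
      set i₀ := e ⟨φ a, hmem⟩ with hi₀
      have hvi₀ : v i₀ = φ a := by
        simp only [hv, hi₀, Equiv.symm_apply_apply]
      rw [Finset.sum_eq_single i₀]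
      · rw [Set.indicator_of_mem (show a ∈ As i₀ from hvi₀.symm), hvi₀]
      · intro j _ hj
        refine Set.indicator_of_notMem (fun hmem' => ?_) _
        exact hj (hinj ((show φ a = v j from hmem').symm.trans hvi₀.symm))
      · intro h; exact absurd (Finset.mem_univ i₀) h
  -- I as a finite sum
  have hIsum : I = ∑ i, v i ^ qr * P (As i) := by
    rw [hI]
    rw [lintegral_congr fun a => by rw [hrep a]]
    exact lintegral_sum_indicator_rpow P hAs hdisj v hqr0
  have hIfin : I ≠ ∞ := by
    rw [hIsum]
    refine (ENNReal.sum_lt_top.mpr fun i _ => ?_).ne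
    exact ENNReal.mul_lt_top (ENNReal.rpow_lt_top_of_nonneg hqr0.le (hvfin i))
      (measure_lt_top P _)
  set C := I ^ (1 / pr) with hC
  have hC0 : C ≠ 0 := by
    rw [hC]
    intro h
    rcases ENNReal.rpow_eq_zero_iff.mp h with ⟨h1, _⟩ | ⟨_, h2⟩
    · exact hI0 h1
    · exact absurd h2 (not_lt.mpr (by positivity))
  have hCtop : C ≠ ∞ := by
    rw [hC]
    exact ENNReal.rpow_ne_top_of_nonneg (by positivity) hIfin
  have hCpr : C ^ pr = I := by
    rw [hC, ← ENNReal.rpow_mul, one_div_mul_cancel hpr0.ne', ENNReal.rpow_one]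
  set cs : Fin n → ℝ≥0 := fun i => (v i ^ (qr - 1) / C).toNNReal with hcs
  have hcs_fin : ∀ i, v i ^ (qr - 1) / C ≠ ∞ := by
    intro i
    exact (ENNReal.div_lt_top (ENNReal.rpow_lt_top_of_nonneg (by linarith) (hvfin i)).ne hC0).ne
  have hcs_coe : ∀ i, (cs i : ℝ≥0∞) = v i ^ (qr - 1) / C := fun i =>
    ENNReal.coe_toNNReal (hcs_fin i)
  -- the constraint
  have hconstraint :
      eLpNorm (fun ω => ∑ i, (As i).indicator (fun _ => (cs i : ℝ)) ω) p P ≤ 1 := by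
    rw [eLpNorm_sum_indicator_eq P hdisj cs hp0 hptop]
    have hint : ∫⁻ ω, (∑ i, (As i).indicator (fun _ => ((cs i : ℝ≥0) : ℝ≥0∞)) ω) ^ p.toReal ∂P
        = ∑ i, ((cs i : ℝ≥0) : ℝ≥0∞) ^ pr * P (As i) :=
      lintegral_sum_indicator_rpow P hAs hdisj _ hpr0
    rw [hint]
    have hterm : ∀ i, ((cs i : ℝ≥0) : ℝ≥0∞) ^ pr * P (As i) = (v i ^ qr * P (As i)) / I := by
      intro i
      rw [hcs_coe i, ENNReal.div_rpow_of_nonneg _ _ hpr0.le, hCpr,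
        ← ENNReal.rpow_mul, hconj.symm.sub_one_mul_conj, div_eq_mul_inv, div_eq_mul_inv]
      ring
    rw [Finset.sum_congr rfl fun i _ => hterm i]
    have : ∑ i, (v i ^ qr * P (As i)) / I = (∑ i, v i ^ qr * P (As i)) / I := by
      simp only [div_eq_mul_inv]
      rw [Finset.sum_mul]
    rw [this, ← hIsum, ENNReal.div_self hI0 hIfin, ENNReal.one_rpow]
  -- apply the key lemma
  have hkey := sum_varM_le_qVar P p m hfinvar A hAs hdisj hsubA hconstraint
  -- lower bound for the sum
  have hchain : I / C ≤ ∑ i, (cs i : ℝ≥0∞) * varM m (As i) := by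
    have hterm : ∀ i, (v i ^ qr * P (As i)) / C ≤ (cs i : ℝ≥0∞) * varM m (As i) := by
      intro i
      have h1 : varM m (As i) = ∫⁻ ω in As i, hfun ω ∂P := hvar _ (hAs i) (hsubA i)
      have h2 : v i * P (As i) ≤ ∫⁻ ω in As i, hfun ω ∂P := by
        have : ∫⁻ _ω in As i, v i ∂P = v i * P (As i) := by
          rw [setLIntegral_const]
        rw [← this]
        refine setLIntegral_mono' (hAs i) fun a ha => ?_
        exact (show φ a = v i from ha) ▸ hφle a
      have h3 : v i ^ (qr - 1) * v i = v i ^ qr := by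
        have h4 := (ENNReal.rpow_add (qr - 1) 1 (hv0 i) (hvfin i)).symm
        rw [ENNReal.rpow_one] at h4
        rw [h4]
        congr 1
        ring
      calc (v i ^ qr * P (As i)) / C = (v i ^ (qr - 1) / C) * (v i * P (As i)) := by
            rw [← h3, div_eq_mul_inv, div_eq_mul_inv]
            ring
        _ ≤ (cs i : ℝ≥0∞) * varM m (As i) := by
            rw [hcs_coe i, h1]
            exact mul_le_mul_of_nonneg_left h2 (zero_le)
    calc I / C = ∑ i, (v i ^ qr * P (As i)) / C := by
          simp only [div_eq_mul_inv]
          rw [← Finset.sum_mul, ← hIsum]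
      _ ≤ _ := Finset.sum_le_sum fun i _ => hterm i
  -- identify I / C with I ^ (1/qr)
  have hIC : I ^ (1 / qr) = I / C := by
    have h1 : (1 : ℝ) - 1 / pr = 1 / qr := by
      have h2 := hconj.inv_add_inv_eq_one
      rw [one_div, one_div]
      linarith
    calc I ^ (1 / qr) = I ^ ((1 : ℝ) - 1 / pr) := by rw [h1]
      _ = I ^ (1 : ℝ) / I ^ (1 / pr) := ENNReal.rpow_sub _ _ hI0 hIfin
      _ = I / C := by rw [ENNReal.rpow_one, hC]
  rw [hIC]
  exact hchain.trans hkey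

end Aux

/-- If the variation measure `|m|` of a countably additive vector measure `m` of finite
variation has Radon–Nikodym density `g ≥ 0` with respect to `ℙ`, and `m̄_q(A) < ∞`, then
`g·1_A ∈ L^q(Ω,ℙ)` and `m̄_q(A) = (∫ |g|^q 1_A dℙ)^{1/q}` (formulated via `eLpNorm`,
which also covers `q = ∞`). -/
theorem stmt6 {Ω E F : Type*} [MeasurableSpace Ω] (P : Measure Ω) [IsProbabilityMeasure P]
    [NormedAddCommGroup E] [NormedSpace ℝ E] [TopologicalSpace.SeparableSpace E]
    [NormedAddCommGroup F] [NormedSpace ℝ F]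
    (p q : ℝ≥0∞) (hp : 1 ≤ p) (hp' : p ≠ ∞) (hpq : 1 / p + 1 / q = 1)
    (m : Set Ω → (E →L[ℝ] F)) (hca : CountablyAdditiveM m)
    (hfinvar : ∀ B : Set Ω, MeasurableSet B → varM m B < ∞)
    (g : Ω → ℝ) (hgm : Measurable g) (hg0 : 0 ≤ g)
    (hdens : ∀ B : Set Ω, MeasurableSet B →
      varM m B = ∫⁻ ω in B, ENNReal.ofReal (g ω) ∂P)
    (A : Set Ω) (hA : MeasurableSet A) (hfin : qVar P m p A < ∞) :
    MemLp (A.indicator g) q P ∧ qVar P m p A = eLpNorm (A.indicator g) q P := by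

  classical
  have hp0 : p ≠ 0 := (lt_of_lt_of_le zero_lt_one hp).ne'
  set G : Ω → ℝ≥0∞ := fun ω => ENNReal.ofReal (g ω) with hGdef
  have hGm : Measurable G := ENNReal.measurable_ofReal.comp hgm
  set hf : Ω → ℝ≥0∞ := A.indicator G with hhf
  have hfm : Measurable hf := hGm.indicator hA
  have hnn : ∀ ω, (‖A.indicator g ω‖₊ : ℝ≥0∞) = hf ω := by
    intro ω
    by_cases hω : ω ∈ A
    · rw [hhf, Set.indicator_of_mem hω, Set.indicator_of_mem hω, hGdef,
        ← enorm_eq_nnnorm, ← ofReal_norm, Real.norm_of_nonneg (hg0 ω)]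
    · rw [hhf, Set.indicator_of_notMem hω, Set.indicator_of_notMem hω]
      simp
  have hzero : ∀ ω, ω ∉ A → hf ω = 0 := fun ω hω => Set.indicator_of_notMem hω _
  have hfin' : ∀ ω, hf ω ≠ ∞ := by
    intro ω
    by_cases hω : ω ∈ A
    · rw [hhf, Set.indicator_of_mem hω]; exact ENNReal.ofReal_ne_top
    · rw [hzero ω hω]; exact ENNReal.zero_ne_top
  have hvar : ∀ B : Set Ω, MeasurableSet B → B ⊆ A → varM m B = ∫⁻ ω in B, hf ω ∂P := by
    intro B hB hBA
    rw [hdens B hB]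
    exact setLIntegral_congr_fun hB (fun ω hω =>
      (Set.indicator_of_mem (hBA hω) G).symm)
  -- upper bound, common computation
  have hupper_core : ∀ (n : ℕ) (As : Fin n → Set Ω) (xs : Fin n → E),
      (∀ i, MeasurableSet (As i)) → Pairwise (Function.onFun Disjoint As) → (∀ i, As i ⊆ A) →
      ∑ i, (‖m (As i) (xs i)‖₊ : ℝ≥0∞)
        ≤ ∫⁻ ω, (∑ i, (As i).indicator (fun _ => (‖xs i‖₊ : ℝ≥0∞)) ω) * hf ω ∂P := by
    intro n As xs hAs hdisj hsub
    rw [lintegral_sum_indicator_mul P hAs _ hfm]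
    refine Finset.sum_le_sum fun i _ => ?_
    calc (‖m (As i) (xs i)‖₊ : ℝ≥0∞) ≤ (‖m (As i)‖₊ : ℝ≥0∞) * ‖xs i‖₊ := by
          exact_mod_cast ENNReal.coe_le_coe.mpr ((m (As i)).le_opNNNorm (xs i))
      _ ≤ varM m (As i) * ‖xs i‖₊ :=
          mul_le_mul_of_nonneg_right (nnnorm_le_varM m (hAs i)) (zero_le)
      _ = (‖xs i‖₊ : ℝ≥0∞) * ∫⁻ ω in As i, hf ω ∂P := by
          rw [hvar _ (hAs i) (hsub i), mul_comm]
  by_cases hq : q = ∞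
  · -- q = ∞, p = 1
    subst hq
    have hp1 : p = 1 := by
      have h1 : (1:ℝ≥0∞)/∞ = 0 := by simp
      rw [h1, add_zero, one_div] at hpq
      rwa [ENNReal.inv_eq_one] at hpq
    subst hp1
    have hnorm_eq : eLpNorm (A.indicator g) ∞ P = essSup hf P := by
      rw [eLpNorm_exponent_top, eLpNormEssSup]
      exact congrArg (fun f => essSup f P) (funext hnn)
    have hle1 : qVar P m 1 A ≤ eLpNorm (A.indicator g) ∞ P := by
      rw [hnorm_eq, qVar]
      refine iSup_le fun n => iSup_le fun As => iSup_le fun xs => iSup_le fun hAs =>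
        iSup_le fun hdisj => iSup_le fun hsub => iSup_le fun hcon => ?_
      set fA : Ω → ℝ≥0∞ := fun ω => ∑ i, (As i).indicator (fun _ => (‖xs i‖₊ : ℝ≥0∞)) ω
        with hfA
      have hfAm : Measurable fA :=
        Finset.measurable_sum _ fun i _ => measurable_const.indicator (hAs i)
      have hint : ∫⁻ ω, fA ω ∂P ≤ 1 := by
        have h2 : eLpNorm (fun ω => ∑ i, (As i).indicator (fun _ => xs i) ω) 1 P
            = (∫⁻ ω, fA ω ^ (1:ℝ≥0∞).toReal ∂P) ^ (1/(1:ℝ≥0∞).toReal) := by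
          rw [eLpNorm_eq_lintegral_rpow_enorm_toReal hp0 hp']
          congr 1
          refine lintegral_congr fun ω => ?_
          congr 1
          exact sum_indicator_nnnorm hdisj xs ω
        rw [h2] at hcon
        simpa using hcon
      calc ∑ i, (‖m (As i) (xs i)‖₊ : ℝ≥0∞) ≤ ∫⁻ ω, fA ω * hf ω ∂P :=
            hupper_core n As xs hAs hdisj hsub
        _ ≤ ∫⁻ ω, fA ω * essSup hf P ∂P := by
            refine lintegral_mono_ae ((ae_le_essSup hf).mono fun ω hω => ?_)
            exact mul_le_mul_right hω _
        _ = (∫⁻ ω, fA ω ∂P) * essSup hf P := lintegral_mul_const _ hfAm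
        _ ≤ 1 * essSup hf P := mul_le_mul_left hint _
        _ = essSup hf P := one_mul _
    have hle2 : eLpNorm (A.indicator g) ∞ P ≤ qVar P m 1 A := by
      rw [hnorm_eq]
      by_contra hcontra
      obtain ⟨c, hc1, hc2⟩ := exists_between (not_le.mp hcontra)
      set B : Set Ω := {ω | c < hf ω} with hB
      have hBmeas : MeasurableSet B := measurableSet_lt measurable_const hfm
      have hPB : P B ≠ 0 := by
        intro h0
        have hae : hf ≤ᵐ[P] fun _ => c := by
          rw [Filter.EventuallyLE, ae_iff]
          have heq : {ω | ¬ hf ω ≤ c} = B := by ext ω; simp [hB, not_le]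
          rwa [heq]
        exact absurd (essSup_le_of_ae_le c hae) (not_le.mpr hc2)
      have hBA : B ⊆ A := by
        intro ω hω
        by_contra hA'
        have h1 : c < hf ω := hω
        rw [hzero ω hA'] at h1
        exact absurd h1 (not_lt.mpr (zero_le))
      set cs0 : ℝ≥0 := (P B)⁻¹.toNNReal with hcs0def
      have hPBfin : (P B)⁻¹ ≠ ∞ := ENNReal.inv_ne_top.mpr hPB
      have hcs0 : (cs0 : ℝ≥0∞) = (P B)⁻¹ := ENNReal.coe_toNNReal hPBfin
      have hdisj1 : Pairwise (Function.onFun Disjoint (fun _ : Fin 1 => B)) := by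
        intro i j hij; exact absurd (Subsingleton.elim i j) hij
      have hconB : eLpNorm
          (fun ω => ∑ _i : Fin 1, B.indicator (fun _ => ((cs0 : ℝ≥0) : ℝ)) ω) 1 P ≤ 1 := by
        rw [eLpNorm_sum_indicator_eq P hdisj1 (fun _ => cs0) hp0 hp',
          lintegral_sum_indicator_rpow P (fun _ => hBmeas) hdisj1 _
            (by simp : (0:ℝ) < (1:ℝ≥0∞).toReal)]
        simp only [ENNReal.toReal_one, ENNReal.rpow_one, Fin.sum_univ_one, one_div, inv_one]
        rw [hcs0, ENNReal.inv_mul_cancel hPB (measure_ne_top P B)]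
      have key := sum_varM_le_qVar P 1 m hfinvar A (fun _ => hBmeas) hdisj1
        (fun _ => hBA) hconB
      rw [Fin.sum_univ_one] at key
      have h4 : c * P B ≤ ∫⁻ ω in B, hf ω ∂P := by
        rw [← setLIntegral_const B c]
        exact setLIntegral_mono' hBmeas fun ω hω => le_of_lt hω
      have h5 : c ≤ qVar P m 1 A := by
        calc c = c * ((P B)⁻¹ * P B) := by
              rw [ENNReal.inv_mul_cancel hPB (measure_ne_top P B), mul_one]
          _ = (P B)⁻¹ * (c * P B) := by ring
          _ ≤ (P B)⁻¹ * ∫⁻ ω in B, hf ω ∂P := mul_le_mul_right h4 _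
          _ = (cs0 : ℝ≥0∞) * varM m B := by rw [hcs0, hvar B hBmeas hBA]
          _ ≤ qVar P m 1 A := key
      exact absurd h5 (not_le.mpr hc1)
    exact ⟨⟨(hgm.indicator hA).aestronglyMeasurable,
      lt_of_le_of_lt hle2 hfin⟩, le_antisymm hle1 hle2⟩
  · -- q finite
    have hq0 : q ≠ 0 := by
      rintro rfl
      simp at hpq
    have hp1 : p ≠ 1 := by
      rintro rfl
      rw [show (1:ℝ≥0∞)/1 = 1 from by norm_num] at hpq
      have h1 : (1:ℝ≥0∞) + 1/q = 1 + 0 := by rw [add_zero]; exact hpq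
      have h2 : (1:ℝ≥0∞)/q = 0 := (ENNReal.add_right_inj ENNReal.one_ne_top).mp h1
      rw [one_div, ENNReal.inv_eq_zero] at h2
      exact hq h2
    have hplt : 1 < p := lt_of_le_of_ne hp (Ne.symm hp1)
    have hprpos : 0 < p.toReal := ENNReal.toReal_pos hp0 hp'
    have hqrpos : 0 < q.toReal := ENNReal.toReal_pos hq0 hq
    have h1p : (1:ℝ≥0∞)/p ≠ ∞ := by rw [one_div]; exact ENNReal.inv_ne_top.mpr hp0
    have h1q : (1:ℝ≥0∞)/q ≠ ∞ := by rw [one_div]; exact ENNReal.inv_ne_top.mpr hq0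
    have hsum : p.toReal⁻¹ + q.toReal⁻¹ = 1 := by
      have h3 := congrArg ENNReal.toReal hpq
      rw [ENNReal.toReal_add h1p h1q] at h3
      simpa [one_div, ENNReal.toReal_inv] using h3
    have hpr1 : 1 < p.toReal := by
      have h4 := (ENNReal.toReal_lt_toReal ENNReal.one_ne_top hp').mpr hplt
      simpa using h4
    have hconj : Real.HolderConjugate p.toReal q.toReal := Real.holderConjugate_iff.mpr ⟨hpr1, hsum⟩
    have hq_eq : eLpNorm (A.indicator g) q P
        = (∫⁻ ω, hf ω ^ q.toReal ∂P) ^ (1 / q.toReal) := by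
      rw [eLpNorm_eq_lintegral_rpow_enorm_toReal hq0 hq]
      congr 1
      refine lintegral_congr fun ω => ?_
      rw [enorm_eq_nnnorm, hnn ω]
    have hle1 : qVar P m p A ≤ eLpNorm (A.indicator g) q P := by
      rw [hq_eq, qVar]
      refine iSup_le fun n => iSup_le fun As => iSup_le fun xs => iSup_le fun hAs =>
        iSup_le fun hdisj => iSup_le fun hsub => iSup_le fun hcon => ?_
      set fA : Ω → ℝ≥0∞ := fun ω => ∑ i, (As i).indicator (fun _ => (‖xs i‖₊ : ℝ≥0∞)) ω
        with hfA
      have hfAm : Measurable fA :=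
        Finset.measurable_sum _ fun i _ => measurable_const.indicator (hAs i)
      have hcon' : (∫⁻ ω, fA ω ^ p.toReal ∂P) ^ (1/p.toReal) ≤ 1 := by
        have h2 : eLpNorm (fun ω => ∑ i, (As i).indicator (fun _ => xs i) ω) p P
            = (∫⁻ ω, fA ω ^ p.toReal ∂P) ^ (1/p.toReal) := by
          rw [eLpNorm_eq_lintegral_rpow_enorm_toReal hp0 hp']
          congr 1
          refine lintegral_congr fun ω => ?_
          congr 1
          exact sum_indicator_nnnorm hdisj xs ω
        rwa [h2] at hcon
      calc ∑ i, (‖m (As i) (xs i)‖₊ : ℝ≥0∞) ≤ ∫⁻ ω, fA ω * hf ω ∂P :=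
            hupper_core n As xs hAs hdisj hsub
        _ ≤ (∫⁻ ω, fA ω ^ p.toReal ∂P) ^ (1/p.toReal)
              * (∫⁻ ω, hf ω ^ q.toReal ∂P) ^ (1/q.toReal) :=
            ENNReal.lintegral_mul_le_Lp_mul_Lq P hconj hfAm.aemeasurable hfm.aemeasurable
        _ ≤ 1 * (∫⁻ ω, hf ω ^ q.toReal ∂P) ^ (1/q.toReal) := mul_le_mul_left hcon' _
        _ = (∫⁻ ω, hf ω ^ q.toReal ∂P) ^ (1/q.toReal) := one_mul _
    have hle2 : eLpNorm (A.indicator g) q P ≤ qVar P m p A := by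
      rw [hq_eq]
      have hperk : ∀ k : ℕ,
          ∫⁻ a, (SimpleFunc.eapprox hf k) a ^ q.toReal ∂P ≤ qVar P m p A ^ q.toReal := by
        intro k
        have hφle : ∀ a, (SimpleFunc.eapprox hf k) a ≤ hf a := fun a =>
          (le_iSup (fun n => (SimpleFunc.eapprox hf n : Ω → ℝ≥0∞) a) k).trans_eq
            (SimpleFunc.iSup_eapprox_apply hfm a)
        have h5 := simple_rpow_le_qVar P p m hfinvar A hf hzero hfin' hvar hconj hp0 hp'
          (SimpleFunc.eapprox hf k) hφle
        have h6 := ENNReal.rpow_le_rpow h5 hqrpos.le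
        rwa [← ENNReal.rpow_mul, one_div_mul_cancel hqrpos.ne', ENNReal.rpow_one] at h6
      have hmeasb : ∀ k : ℕ, Measurable (fun a => (SimpleFunc.eapprox hf k) a ^ q.toReal) :=
        fun k => ENNReal.continuous_rpow_const.measurable.comp
          (SimpleFunc.eapprox hf k).measurable
      have hmono : Monotone (fun (k : ℕ) (a : Ω) => (SimpleFunc.eapprox hf k) a ^ q.toReal) :=
        fun k1 k2 h12 a => ENNReal.rpow_le_rpow
          (SimpleFunc.monotone_eapprox hf h12 a) hqrpos.le
      have hmct : ∫⁻ ω, hf ω ^ q.toReal ∂P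
          = ⨆ k, ∫⁻ ω, (SimpleFunc.eapprox hf k) ω ^ q.toReal ∂P := by
        calc ∫⁻ ω, hf ω ^ q.toReal ∂P
            = ∫⁻ ω, ⨆ k, (SimpleFunc.eapprox hf k) ω ^ q.toReal ∂P := by
              refine lintegral_congr fun a => ?_
              rw [← SimpleFunc.iSup_eapprox_apply hfm a]
              exact Monotone.map_iSup_of_continuousAt
                ENNReal.continuous_rpow_const.continuousAt
                (ENNReal.monotone_rpow_of_nonneg hqrpos.le)
                (ENNReal.zero_rpow_of_pos hqrpos)
          _ = ⨆ k, ∫⁻ ω, (SimpleFunc.eapprox hf k) ω ^ q.toReal ∂P :=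
              lintegral_iSup hmeasb hmono
      have h7 : ∫⁻ ω, hf ω ^ q.toReal ∂P ≤ qVar P m p A ^ q.toReal := by
        rw [hmct]
        exact iSup_le hperk
      have h8 := ENNReal.rpow_le_rpow h7 (by positivity : (0:ℝ) ≤ 1 / q.toReal)
      rwa [← ENNReal.rpow_mul, mul_one_div_cancel hqrpos.ne', ENNReal.rpow_one] at h8
    exact ⟨⟨(hgm.indicator hA).aestronglyMeasurable,
      lt_of_le_of_lt hle2 hfin⟩, le_antisymm hle1 hle2⟩
end
end

section
/- Let g ∈ L^q(Ω, ℙ) (1 < q < ∞) and A ∈ F with ℙ(A) > 0. If E[1_{A_1} g] = E[1_{A_2} g] for all measurable A_1, A_2 ⊆ A with ℙ(A_1) = ℙ(A_2), and (Ω,F,ℙ) is atomless, then g is ℙ-almost surely constant on A. -/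
open MeasureTheory ENNReal Filter

lemma small_piece {Ω : Type*} [MeasurableSpace Ω] (P : Measure Ω) [IsProbabilityMeasure P]
    (hatomless : ∀ A : Set Ω, MeasurableSet A → 0 < P A →
      ∃ B : Set Ω, MeasurableSet B ∧ B ⊆ A ∧ 0 < P B ∧ P B < P A)
    (S : Set Ω) (hS : MeasurableSet S) (hpos : 0 < P S) :
    ∃ B : Set Ω, MeasurableSet B ∧ B ⊆ S ∧ 0 < P B ∧ P B ≤ P S / 2 := by
  obtain ⟨B, hBm, hBS, hB0, hBlt⟩ := hatomless S hS hpos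
  have hfin : P S ≠ ∞ := measure_ne_top P S
  have hsum : P B + P (S \ B) = P S := by
    rw [measure_add_diff hBm.nullMeasurableSet S, Set.union_eq_self_of_subset_left hBS]
  have hdpos : 0 < P (S \ B) := by
    by_contra h
    push_neg at h
    have : P (S \ B) = 0 := le_antisymm h zero_le
    rw [this, add_zero] at hsum
    exact absurd hsum (ne_of_lt hBlt)
  rcases le_or_gt (P B) (P S / 2) with h | h
  · exact ⟨B, hBm, hBS, hB0, h⟩
  · refine ⟨S \ B, hS.diff hBm, Set.diff_subset, hdpos, ?_⟩
    by_contra hc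
    push_neg at hc
    have : P S < P B + P (S \ B) := by
      calc P S = P S / 2 + P S / 2 := (ENNReal.add_halves _).symm
      _ < P B + P (S \ B) := ENNReal.add_lt_add h hc
    exact absurd hsum (ne_of_gt this)

lemma smallSubset {Ω : Type*} [MeasurableSpace Ω] (P : Measure Ω) [IsProbabilityMeasure P]
    (hatomless : ∀ A : Set Ω, MeasurableSet A → 0 < P A →
      ∃ B : Set Ω, MeasurableSet B ∧ B ⊆ A ∧ 0 < P B ∧ P B < P A)
    (S : Set Ω) (hS : MeasurableSet S) (hpos : 0 < P S) (ε : ℝ≥0∞) (hε : 0 < ε) :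
    ∃ B : Set Ω, MeasurableSet B ∧ B ⊆ S ∧ 0 < P B ∧ P B < ε := by
  have key : ∀ n : ℕ, ∃ B : Set Ω, MeasurableSet B ∧ B ⊆ S ∧ 0 < P B ∧ P B ≤ P S / 2 ^ n := by
    intro n
    induction n with
    | zero => exact ⟨S, hS, subset_rfl, hpos, by simp⟩
    | succ n ih =>
      obtain ⟨B, hBm, hBS, hB0, hBle⟩ := ih
      obtain ⟨C, hCm, hCB, hC0, hCle⟩ := small_piece P hatomless B hBm hB0
      refine ⟨C, hCm, hCB.trans hBS, hC0, ?_⟩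
      calc P C ≤ P B / 2 := hCle
      _ ≤ P S / 2 ^ n / 2 := by gcongr
      _ = P S / 2 ^ (n + 1) := by
        rw [pow_succ, div_eq_mul_inv, div_eq_mul_inv, div_eq_mul_inv, ENNReal.mul_inv (Or.inl (by simp)) (Or.inl (by simp)), mul_assoc]
  obtain ⟨n, hn⟩ := ENNReal.exists_inv_two_pow_lt (ne_of_gt hε)
  obtain ⟨B, hBm, hBS, hB0, hBle⟩ := key n
  refine ⟨B, hBm, hBS, hB0, lt_of_le_of_lt ?_ hn⟩
  calc P B ≤ P S / 2 ^ n := hBle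
  _ ≤ 1 / 2 ^ n := by gcongr; exact prob_le_one
  _ = 2⁻¹ ^ n := by rw [one_div, ENNReal.inv_pow]


lemma sierpinski {Ω : Type*} [MeasurableSpace Ω] (P : Measure Ω) [IsProbabilityMeasure P]
    (hsmall : ∀ S : Set Ω, MeasurableSet S → 0 < P S → ∀ ε : ℝ≥0∞, 0 < ε →
      ∃ B : Set Ω, MeasurableSet B ∧ B ⊆ S ∧ 0 < P B ∧ P B < ε)
    (S : Set Ω) (hS : MeasurableSet S) (r : ℝ≥0∞) (hr : r ≤ P S) :
    ∃ T : Set Ω, MeasurableSet T ∧ T ⊆ S ∧ P T = r := by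
  classical
  set Cand : Set (Set Ω) := {T | MeasurableSet T ∧ T ⊆ S ∧ P T ≤ r} with hCand
  have hrne : r ≠ ∞ := ne_top_of_le_ne_top (measure_ne_top P S) hr
  set σ : Set Ω → ℝ≥0∞ := fun T => sSup ((fun T' => P T') '' {T' | T' ∈ Cand ∧ T ⊆ T'}) with hσ
  have hσle : ∀ T, σ T ≤ r := by
    intro T
    apply sSup_le
    rintro b ⟨T', ⟨hT', _⟩, rfl⟩
    exact hT'.2.2
  -- step
  have hstep : ∀ T : {T // T ∈ Cand}, ∃ T' : {T // T ∈ Cand},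
      T.1 ⊆ T'.1 ∧ (P T.1 + σ T.1) / 2 ≤ P T'.1 := by
    rintro ⟨T, hT⟩
    rcases le_or_gt (σ T) (P T) with h | h
    · refine ⟨⟨T, hT⟩, subset_rfl, ?_⟩
      calc (P T + σ T) / 2 ≤ (P T + P T) / 2 := by gcongr
      _ = P T := by rw [ENNReal.add_div, ENNReal.add_halves]
    · have hσfin : σ T ≠ ∞ := ne_top_of_le_ne_top hrne (hσle T)
      have hmid : (P T + σ T) / 2 < σ T := by
        have h2 : (P T + σ T) / 2 < (σ T + σ T) / 2 := by
          rw [div_eq_mul_inv, div_eq_mul_inv, ENNReal.mul_lt_mul_iff_left (by simp) (by simp)]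
          rw [ENNReal.add_lt_add_iff_right hσfin]
          exact h
        calc (P T + σ T) / 2 < (σ T + σ T) / 2 := h2
        _ = σ T := by rw [ENNReal.add_div, ENNReal.add_halves]
      obtain ⟨b, ⟨T', ⟨hT'c, hTT'⟩, rfl⟩, hb⟩ := lt_sSup_iff.mp hmid
      exact ⟨⟨T', hT'c⟩, hTT', le_of_lt hb⟩
  choose next hsub hgrow using hstep
  have hemp : (∅ : Set Ω) ∈ Cand := ⟨MeasurableSet.empty, Set.empty_subset _, by simp⟩
  set seq : ℕ → {T // T ∈ Cand} := fun n => next^[n] ⟨∅, hemp⟩ with hseq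
  have hseqsucc : ∀ n, seq (n + 1) = next (seq n) := fun n =>
    Function.iterate_succ_apply' next n _
  have hmono : Monotone fun n => (seq n).1 := by
    apply monotone_nat_of_le_succ
    intro n
    rw [hseqsucc]
    exact hsub (seq n)
  set Tinf : Set Ω := ⋃ n, (seq n).1 with hTinf
  have hTinfm : MeasurableSet Tinf := MeasurableSet.iUnion fun n => (seq n).2.1
  have hTinfS : Tinf ⊆ S := Set.iUnion_subset fun n => (seq n).2.2.1
  have hPTinf : P Tinf = ⨆ n, P (seq n).1 :=
    Directed.measure_iUnion (Monotone.directed_le hmono)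
  have hTinfr : P Tinf ≤ r := by
    rw [hPTinf]; exact iSup_le fun n => (seq n).2.2.2
  refine ⟨Tinf, hTinfm, hTinfS, ?_⟩
  by_contra hne
  have hlt : P Tinf < r := lt_of_le_of_ne hTinfr hne
  have hdiffpos : 0 < P (S \ Tinf) := by
    have : P (S \ Tinf) = P S - P Tinf := measure_diff hTinfS hTinfm.nullMeasurableSet (measure_ne_top _ _)
    rw [this]
    exact tsub_pos_iff_lt.mpr (lt_of_lt_of_le hlt hr)
  obtain ⟨U, hUm, hUS, hU0, hUlt⟩ := hsmall (S \ Tinf) (hS.diff hTinfm) hdiffpos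
    (r - P Tinf) (tsub_pos_iff_lt.mpr hlt)
  have hUdisj : ∀ n, Disjoint (seq n).1 U := by
    intro n
    apply Set.disjoint_left.mpr
    intro x hx hxU
    exact (hUS hxU).2 (Set.mem_iUnion.mpr ⟨n, hx⟩)
  have hσge : ∀ n, P (seq n).1 + P U ≤ σ (seq n).1 := by
    intro n
    have hmem : ((seq n).1 ∪ U) ∈ Cand ∧ (seq n).1 ⊆ (seq n).1 ∪ U := by
      constructor
      · refine ⟨(seq n).2.1.union hUm, Set.union_subset (seq n).2.2.1 (hUS.trans Set.diff_subset), ?_⟩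
        calc P ((seq n).1 ∪ U) ≤ P (seq n).1 + P U := measure_union_le (μ := P) _ _
        _ ≤ P Tinf + P U := add_le_add_left (measure_mono (Set.subset_iUnion (fun n => (seq n).1) n)) _
        _ ≤ P Tinf + (r - P Tinf) := add_le_add_right hUlt.le _
        _ = r := add_tsub_cancel_of_le (le_of_lt hlt)
      · exact Set.subset_union_left
    have hval : P ((seq n).1 ∪ U) = P (seq n).1 + P U := measure_union (hUdisj n) hUm
    rw [← hval]
    exact le_sSup ⟨(seq n).1 ∪ U, ⟨hmem.1, hmem.2⟩, rfl⟩
  have hgrow' : ∀ n, P (seq n).1 + P U / 2 ≤ P (seq (n + 1)).1 := by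
    intro n
    have := hgrow (seq n)
    rw [← hseqsucc] at this
    calc P (seq n).1 + P U / 2 = (P (seq n).1 + (P (seq n).1 + P U)) / 2 := by
          rw [← add_assoc, ENNReal.add_div, ENNReal.add_div, ENNReal.add_halves]
    _ ≤ (P (seq n).1 + σ (seq n).1) / 2 := by gcongr; exact hσge n
    _ ≤ P (seq (n + 1)).1 := this
  have hlin : ∀ n : ℕ, (n : ℝ≥0∞) * (P U / 2) ≤ P (seq n).1 := by
    intro n
    induction n with
    | zero => simp
    | succ n ih =>
      push_cast
      rw [add_mul, one_mul]
      calc (n : ℝ≥0∞) * (P U / 2) + P U / 2 ≤ P (seq n).1 + P U / 2 := by gcongr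
      _ ≤ P (seq (n + 1)).1 := hgrow' n
  -- contradiction
  have hu0 : P U / 2 ≠ 0 := by
    simp only [ne_eq, ENNReal.div_eq_zero_iff]
    push_neg
    exact ⟨ne_of_gt hU0, by simp⟩
  obtain ⟨n, hn⟩ := ENNReal.exists_nat_gt (r := 1 / (P U / 2))
    (by rw [one_div]; exact ENNReal.inv_ne_top.mpr hu0)
  have hutop : P U / 2 ≠ ∞ := by
    refine ne_top_of_le_ne_top (measure_ne_top P U) ?_
    exact ENNReal.half_le_self
  have h1 : (1 : ℝ≥0∞) < n * (P U / 2) := by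
    rw [ENNReal.div_lt_iff (Or.inl hu0) (Or.inl hutop)] at hn
    exact hn
  have : (n : ℝ≥0∞) * (P U / 2) ≤ 1 := le_trans (le_trans (hlin n) (seq n).2.2.2)
    (le_trans hr prob_le_one)
  exact absurd h1 (not_lt.mpr this)

noncomputable section

/-- If `g ∈ L^q` (`1 < q < ∞`) on an atomless probability space has equal integrals over
all measurable subsets of `A` of equal probability, then `g` is a.s. constant on `A`. -/
theorem stmt11 {Ω : Type*} [MeasurableSpace Ω] (P : Measure Ω) [IsProbabilityMeasure P]
    (hatomless : ∀ A : Set Ω, MeasurableSet A → 0 < P A →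
      ∃ B : Set Ω, MeasurableSet B ∧ B ⊆ A ∧ 0 < P B ∧ P B < P A)
    (q : ℝ) (hq : 1 < q)
    (g : Ω → ℝ) (hg : MemLp g (ENNReal.ofReal q) P)
    (A : Set Ω) (hA : MeasurableSet A) (hApos : 0 < P A)
    (hconst : ∀ A₁ A₂ : Set Ω, MeasurableSet A₁ → MeasurableSet A₂ →
      A₁ ⊆ A → A₂ ⊆ A → P A₁ = P A₂ →
      ∫ ω in A₁, g ω ∂P = ∫ ω in A₂, g ω ∂P) :
    ∃ c : ℝ, ∀ᵐ ω ∂P, ω ∈ A → g ω = c := by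
  classical
  have hsmall := smallSubset P hatomless
  -- measurable representative
  obtain ⟨g', hg'meas, hgg'⟩ : ∃ g' : Ω → ℝ, Measurable g' ∧ g =ᵐ[P] g' :=
    ⟨hg.aestronglyMeasurable.mk g, hg.aestronglyMeasurable.stronglyMeasurable_mk.measurable,
      hg.aestronglyMeasurable.ae_eq_mk⟩
  have hint : Integrable g P := hg.integrable (ENNReal.one_le_ofReal.mpr (le_of_lt hq))
  have hint' : Integrable g' P := hint.congr hgg'
  set L : ℝ → Set Ω := fun c => A ∩ {ω | g' ω ≤ c} with hL
  set Uu : ℝ → Set Ω := fun c => A ∩ {ω | c ≤ g' ω} with hU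
  have mL : ∀ c, MeasurableSet (L c) := fun c => hA.inter (hg'meas measurableSet_Iic)
  have mU : ∀ c, MeasurableSet (Uu c) := fun c => hA.inter (hg'meas measurableSet_Ici)
  by_cases hcase : ∃ c c' : ℝ, c < c' ∧ 0 < P (L c) ∧ 0 < P (Uu c')
  · exfalso
    obtain ⟨c, c', hcc', hLpos, hUpos⟩ := hcase
    set t := min (P (L c)) (P (Uu c')) with ht
    have ht0 : 0 < t := lt_min hLpos hUpos
    have htfin : t ≠ ∞ := ne_top_of_le_ne_top (measure_ne_top P _) (min_le_left _ _)
    have htR : 0 < t.toReal := ENNReal.toReal_pos (ne_of_gt ht0) htfin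
    obtain ⟨C₁, hC₁m, hC₁sub, hC₁⟩ := sierpinski P hsmall (L c) (mL c) t (min_le_left _ _)
    obtain ⟨C₂, hC₂m, hC₂sub, hC₂⟩ := sierpinski P hsmall (Uu c') (mU c') t (min_le_right _ _)
    have heq := hconst C₁ C₂ hC₁m hC₂m (hC₁sub.trans Set.inter_subset_left)
      (hC₂sub.trans Set.inter_subset_left) (by rw [hC₁, hC₂])
    have heq' : ∫ ω in C₁, g' ω ∂P = ∫ ω in C₂, g' ω ∂P := by
      calc ∫ ω in C₁, g' ω ∂P = ∫ ω in C₁, g ω ∂P :=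
            integral_congr_ae (ae_restrict_of_ae hgg'.symm)
      _ = ∫ ω in C₂, g ω ∂P := heq
      _ = ∫ ω in C₂, g' ω ∂P := integral_congr_ae (ae_restrict_of_ae hgg')
    have hup : ∫ ω in C₁, g' ω ∂P ≤ c * t.toReal := by
      calc ∫ ω in C₁, g' ω ∂P ≤ ∫ _ω in C₁, c ∂P := by
            apply setIntegral_mono_on hint'.integrableOn (integrableOn_const (measure_ne_top P _)) hC₁m
            intro x hx
            exact (hC₁sub hx).2
      _ = c * t.toReal := by rw [setIntegral_const, measureReal_def, hC₁, smul_eq_mul, mul_comm]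
    have hdown : c' * t.toReal ≤ ∫ ω in C₂, g' ω ∂P := by
      calc c' * t.toReal = ∫ _ω in C₂, c' ∂P := by
            rw [setIntegral_const, measureReal_def, hC₂, smul_eq_mul, mul_comm]
      _ ≤ ∫ ω in C₂, g' ω ∂P := by
            apply setIntegral_mono_on (integrableOn_const (measure_ne_top P _)) hint'.integrableOn hC₂m
            intro x hx
            exact (hC₂sub hx).2
    have : c' * t.toReal < c' * t.toReal := by
      calc c' * t.toReal ≤ ∫ ω in C₂, g' ω ∂P := hdown
      _ = ∫ ω in C₁, g' ω ∂P := heq'.symm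
      _ ≤ c * t.toReal := hup
      _ < c' * t.toReal := by nlinarith
    exact absurd this (lt_irrefl _)
  · push_neg at hcase
    have hneg : ∀ c c' : ℝ, c < c' → 0 < P (L c) → P (Uu c') = 0 := by
      intro c c' h1 h2
      have := hcase c c' h1 h2
      exact le_antisymm this zero_le
    set T : Set ℝ := {c | P (L c) = 0} with hT
    -- some n₀ with positive lower set
    have hn₀ : ∃ n : ℕ, 0 < P (L n) := by
      by_contra h
      push_neg at h
      have hnull : P (⋃ n : ℕ, L n) = 0 :=
        measure_iUnion_null fun n => le_antisymm (h n) zero_le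
      have hAsub : A ⊆ ⋃ n : ℕ, L n := by
        intro ω hω
        obtain ⟨n, hn⟩ := exists_nat_ge (g' ω)
        exact Set.mem_iUnion.mpr ⟨n, hω, hn⟩
      exact absurd (le_antisymm (le_trans (measure_mono hAsub) (le_of_eq hnull)) zero_le)
        (ne_of_gt hApos)
    obtain ⟨n₀, hn₀⟩ := hn₀
    have hTbdd : BddAbove T := by
      refine ⟨n₀, fun c hc => ?_⟩
      by_contra h
      push_neg at h
      have : P (L n₀) ≤ P (L c) := measure_mono (Set.inter_subset_inter_right _
        (fun ω hω => le_trans hω (le_of_lt h)))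
      rw [hc] at this
      exact absurd (le_antisymm this zero_le) (ne_of_gt hn₀)
    have hTne : T.Nonempty := by
      by_contra h
      have hpos : ∀ c : ℝ, 0 < P (L c) := by
        intro c
        rcases (show (0:ℝ≥0∞) ≤ P (L c) from zero_le).lt_or_eq with h' | h'
        · exact h'
        · exact absurd (⟨c, h'.symm⟩ : T.Nonempty) h
      have hunull : ∀ c : ℝ, P (Uu c) = 0 := fun c =>
        hneg (c - 1) c (by linarith) (hpos (c - 1))
      have hAsub : A ⊆ ⋃ n : ℕ, Uu (-(n : ℝ)) := by
        intro ω hω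
        obtain ⟨n, hn⟩ := exists_nat_ge (-(g' ω))
        exact Set.mem_iUnion.mpr ⟨n, hω, show -(n:ℝ) ≤ g' ω by linarith⟩
      have hnull : P (⋃ n : ℕ, Uu (-(n : ℝ))) = 0 := measure_iUnion_null fun n => hunull _
      exact absurd (le_antisymm (le_trans (measure_mono hAsub) (le_of_eq hnull)) zero_le)
        (ne_of_gt hApos)
    set c₀ := sSup T with hc₀
    -- (a) a.e. ω ∈ A → c₀ ≤ g' ω
    have keyL : ∀ k : ℕ, P (L (c₀ - 1 / (k + 1))) = 0 := by
      intro k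
      have h1 : c₀ - 1 / (k + 1) < c₀ := by
        have : (0 : ℝ) < 1 / (k + 1) := by positivity
        linarith
      obtain ⟨s, hsT, hs⟩ := exists_lt_of_lt_csSup hTne h1
      have : P (L (c₀ - 1 / (k + 1))) ≤ P (L s) := measure_mono
        (Set.inter_subset_inter_right _ (fun ω hω => le_trans hω (le_of_lt hs)))
      rw [hsT] at this
      exact le_antisymm this zero_le
    have hlow : P {ω | ω ∈ A ∧ g' ω < c₀} = 0 := by
      have hsub : {ω | ω ∈ A ∧ g' ω < c₀} ⊆ ⋃ k : ℕ, L (c₀ - 1 / (k + 1)) := by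
        rintro ω ⟨hωA, hω⟩
        obtain ⟨k, hk⟩ := exists_nat_one_div_lt (by linarith : (0:ℝ) < c₀ - g' ω)
        exact Set.mem_iUnion.mpr ⟨k, hωA, show g' ω ≤ c₀ - 1 / ((k:ℝ) + 1) by linarith⟩
      exact le_antisymm (le_trans (measure_mono hsub)
        (le_of_eq (measure_iUnion_null fun k => keyL k))) zero_le
    -- (b) a.e. ω ∈ A → g' ω ≤ c₀
    have keyU : ∀ c'' : ℝ, c₀ < c'' → P (Uu c'') = 0 := by
      intro c'' hcc
      set c' := (c₀ + c'') / 2 with hc'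
      have h1 : c₀ < c' := by rw [hc']; linarith
      have h2 : c' < c'' := by rw [hc']; linarith
      have hc'T : c' ∉ T := fun h => absurd (le_csSup hTbdd h) (not_le.mpr h1)
      have hpos : 0 < P (L c') := by
        rcases (show (0:ℝ≥0∞) ≤ P (L c') from zero_le).lt_or_eq with h' | h'
        · exact h'
        · exact absurd h'.symm hc'T
      exact hneg c' c'' h2 hpos
    have hhigh : P {ω | ω ∈ A ∧ c₀ < g' ω} = 0 := by
      have hsub : {ω | ω ∈ A ∧ c₀ < g' ω} ⊆ ⋃ k : ℕ, Uu (c₀ + 1 / (k + 1)) := by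
        rintro ω ⟨hωA, hω⟩
        obtain ⟨k, hk⟩ := exists_nat_one_div_lt (by linarith : (0:ℝ) < g' ω - c₀)
        exact Set.mem_iUnion.mpr ⟨k, hωA, show c₀ + 1 / ((k:ℝ) + 1) ≤ g' ω by linarith⟩
      refine le_antisymm (le_trans (measure_mono hsub)
        (le_of_eq (measure_iUnion_null fun k => keyU _ ?_))) zero_le
      have : (0 : ℝ) < 1 / (k + 1 : ℝ) := by positivity
      push_cast
      linarith
    refine ⟨c₀, ?_⟩
    have hae' : ∀ᵐ ω ∂P, ω ∈ A → g' ω = c₀ := by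
      rw [ae_iff]
      refine measure_mono_null ?_ (measure_union_null hlow hhigh)
      intro ω hω
      simp only [Set.mem_setOf_eq, not_forall] at hω
      push_neg at hω
      obtain ⟨hωA, hne⟩ := hω
      rcases lt_or_gt_of_ne hne with h | h
      · exact Or.inl ⟨hωA, h⟩
      · exact Or.inr ⟨hωA, h⟩
    filter_upwards [hae', hgg'] with ω h1 h2 hωA
    rw [h2]
    exact h1 hωA
end
end
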